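/- arXiv:2301.08538 — 10 statements merged into one kernel-verified Lean document; each statement's English description precedes it below -/
import Mathlib

section
/- Let C be a bounded join-semilattice and S ⊆ C a finite subset. Then the maps α_S, α_{Ŝ} and α_{S̃} from C to C are all equal; that is, for every c ∈ C, sup(S ∩ ↓c) = sup(Ŝ ∩ ↓c) = sup(S̃ ∩ ↓c). -/
open Finset CategoryTheory

set_option linter.unusedSectionVars false

variable {C : Type*} [SemilatticeSup C] [OrderBot C] [DecidableEq C]

/-- `hatF S` is the set of joins (minimal upper bounds) of non-empty subsets of `S`. -/
noncomputable def hatF (S : Finset C) : Finset C :=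
  ((S.powerset.filter (fun T => T.Nonempty)).attach).image
    (fun T => T.1.sup' (Finset.mem_filter.mp T.2).2 id)

/-- `tildeF S = hatF S ∪ {⊥}`. -/
noncomputable def tildeF (S : Finset C) : Finset C := insert ⊥ (hatF S)

/-- `alphaF S c` is the join of the elements of `S` lying below `c`. -/
noncomputable def alphaF (S : Finset C) (c : C) : C :=
  letI := Classical.decPred (fun x : C => x ≤ c)
  (S.filter (fun x => x ≤ c)).sup id

lemma alphaF_le (S : Finset C) (c : C) : alphaF S c ≤ c := by
  classical
  exact Finset.sup_le fun x hx => (Finset.mem_filter.mp hx).2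

lemma alphaF_mono (S : Finset C) : Monotone (alphaF S) := by
  intro c d h
  classical
  exact Finset.sup_mono (Finset.monotone_filter_right S (fun x _ hx => le_trans hx h))

lemma mem_hatF {S : Finset C} {x : C} :
    x ∈ hatF S ↔ ∃ T : Finset C, T ⊆ S ∧ ∃ h : T.Nonempty, T.sup' h id = x := by
  classical
  simp only [hatF, Finset.mem_image, Finset.mem_attach, true_and, Subtype.exists]
  constructor
  · rintro ⟨T, hT, rfl⟩
    have h := Finset.mem_filter.mp hT
    exact ⟨T, Finset.mem_powerset.mp h.1, h.2, rfl⟩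
  · rintro ⟨T, hTS, h, rfl⟩
    exact ⟨T, Finset.mem_filter.mpr ⟨Finset.mem_powerset.mpr hTS, h⟩, rfl⟩

lemma self_mem_hatF {S : Finset C} {x : C} (hx : x ∈ S) : x ∈ hatF S := by
  exact mem_hatF.mpr ⟨{x}, Finset.singleton_subset_iff.mpr hx,
    Finset.singleton_nonempty x, by simp⟩

lemma le_alphaF_of_mem {S : Finset C} {x c : C} (hx : x ∈ S) (hxc : x ≤ c) :
    x ≤ alphaF S c := by
  classical
  exact Finset.le_sup (f := id) (by simp [hx, hxc])

theorem stmt2 (S : Finset C) (c : C) :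
    alphaF S c = alphaF (hatF S) c ∧ alphaF S c = alphaF (tildeF S) c := by
  classical
  have h1 : alphaF S c = alphaF (hatF S) c := by
    apply le_antisymm
    · refine Finset.sup_le fun x hx => ?_
      obtain ⟨hxS, hxc⟩ := Finset.mem_filter.mp hx
      exact le_alphaF_of_mem (self_mem_hatF hxS) hxc
    · refine Finset.sup_le fun y hy => ?_
      obtain ⟨hyH, hyc⟩ := Finset.mem_filter.mp hy
      obtain ⟨T, hTS, h, rfl⟩ := mem_hatF.mp hyH
      exact Finset.sup'_le h id fun t ht =>
        le_alphaF_of_mem (hTS ht) (le_trans (Finset.le_sup' id ht) hyc)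
  have h2 : alphaF (hatF S) c = alphaF (tildeF S) c := by
    apply le_antisymm
    · exact Finset.sup_mono (Finset.filter_subset_filter _
        (Finset.subset_insert _ _))
    · refine Finset.sup_le fun y hy => ?_
      obtain ⟨hyT, hyc⟩ := Finset.mem_filter.mp hy
      rcases Finset.mem_insert.mp hyT with rfl | hyH
      · exact bot_le
      · exact le_alphaF_of_mem hyH hyc
  exact ⟨h1, h1.trans h2⟩
end

section
/- Let C be a bounded join-semilattice, S ⊆ C a finite subset, and α(c) = sup(S̃ ∩ ↓c). Then for all c ∈ C, Ŝ ∩ ↓α(c) = Ŝ ∩ ↓c; i.e. an element of Ŝ lies below c if and only if it lies below α(c). -/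
open Finset CategoryTheory

set_option linter.unusedSectionVars false

variable {C : Type*} [SemilatticeSup C] [OrderBot C] [DecidableEq C]

theorem stmt3 (S : Finset C) (c : C) :
    {x : C | x ∈ hatF S ∧ x ≤ alphaF (tildeF S) c} = {x : C | x ∈ hatF S ∧ x ≤ c} := by
  classical
  ext x
  simp only [Set.mem_setOf_eq, and_congr_right_iff]
  intro hx
  constructor
  · intro h; exact h.trans (alphaF_le _ c)
  · intro h
    have hmem : x ∈ (tildeF S).filter (fun y => y ≤ c) :=
      Finset.mem_filter.mpr ⟨Finset.mem_insert_of_mem hx, h⟩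
    exact Finset.le_sup (f := id) hmem
end

section
/- Let C be a bounded join-semilattice, R a commutative ring, M a functor from C (as a category) to R-modules, and S ⊆ C a finite subset. The following are equivalent: (1) for all c ≤ d in C, if S ∩ ↓c = S ∩ ↓d then the map M(c ≤ d) : M(c) → M(d) is an isomorphism; (2) the natural transformation T_α : res_α res_{S̃} M → M, given at c by M(α(c) ≤ c) : M(α(c)) → M(c), is an isomorphism; (3) there exists a functor N : S̃ → R-Mod such that M is naturally isomorphic to N ∘ α (i.e. α encodes M). -/
open Finset CategoryTheory

set_option linter.unusedSectionVars false

variable {C : Type*} [SemilatticeSup C] [OrderBot C] [DecidableEq C]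

lemma mem_tildeF_of_mem {S : Finset C} {s : C} (hs : s ∈ S) : s ∈ tildeF S := by
  refine Finset.mem_insert.mpr (Or.inr ?_)
  refine Finset.mem_image.mpr ⟨⟨{s}, ?_⟩, Finset.mem_attach _ _, ?_⟩
  · exact Finset.mem_filter.mpr ⟨Finset.mem_powerset.mpr (Finset.singleton_subset_iff.mpr hs),
      Finset.singleton_nonempty s⟩
  · exact Finset.sup'_singleton _

lemma le_alphaF {S : Finset C} {s c : C} (hs : s ∈ S) (h : s ≤ c) : s ≤ alphaF S c := by
  classical
  exact Finset.le_sup (f := id) (Finset.mem_filter.mpr ⟨hs, h⟩)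

lemma alphaF_idem (S : Finset C) (c : C) : alphaF S (alphaF S c) = alphaF S c := by
  classical
  refine le_antisymm (alphaF_le _ _) (Finset.sup_le fun x hx => ?_)
  obtain ⟨hxS, hxc⟩ := Finset.mem_filter.mp hx
  exact le_alphaF hxS (le_alphaF hxS hxc)

lemma tildeF_le_congr {S : Finset C} {c d : C}
    (hset : {x : C | x ∈ S ∧ x ≤ c} = {x : C | x ∈ S ∧ x ≤ d})
    {t : C} (ht : t ∈ tildeF S) (htc : t ≤ c) : t ≤ d := by
  rcases Finset.mem_insert.mp ht with h | h
  · subst h; exact bot_le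
  · obtain ⟨⟨U, hU⟩, -, rfl⟩ := Finset.mem_image.mp h
    obtain ⟨hUS, hUne⟩ := Finset.mem_filter.mp hU
    refine Finset.sup'_le _ _ fun u hu => ?_
    have huc : u ≤ c := le_trans (Finset.le_sup' id hu) htc
    have : u ∈ {x : C | x ∈ S ∧ x ≤ d} := hset ▸ ⟨Finset.mem_powerset.mp hUS hu, huc⟩
    exact this.2

lemma alphaF_tildeF_congr {S : Finset C} {c d : C}
    (hset : {x : C | x ∈ S ∧ x ≤ c} = {x : C | x ∈ S ∧ x ≤ d}) :
    alphaF (tildeF S) c = alphaF (tildeF S) d := by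
  classical
  refine le_antisymm (Finset.sup_le fun t ht => ?_) (Finset.sup_le fun t ht => ?_)
  · obtain ⟨htT, htc⟩ := Finset.mem_filter.mp ht
    exact le_alphaF htT (tildeF_le_congr hset htT htc)
  · obtain ⟨htT, htd⟩ := Finset.mem_filter.mp ht
    exact le_alphaF htT (tildeF_le_congr hset.symm htT htd)

lemma setA (S : Finset C) (c : C) :
    {x : C | x ∈ S ∧ x ≤ alphaF (tildeF S) c} = {x : C | x ∈ S ∧ x ≤ c} := by
  ext x
  exact ⟨fun ⟨hx, h⟩ => ⟨hx, h.trans (alphaF_le _ _)⟩,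
    fun ⟨hx, h⟩ => ⟨hx, le_alphaF (mem_tildeF_of_mem hx) h⟩⟩

theorem stmt4 (R : Type) [CommRing R] (S : Finset C) (M : C ⥤ ModuleCat R) :
    ((∀ (c d : C) (h : c ≤ d),
        {x : C | x ∈ S ∧ x ≤ c} = {x : C | x ∈ S ∧ x ≤ d} → IsIso (M.map (homOfLE h)))
      ↔ (∀ c : C, IsIso (M.map (homOfLE (alphaF_le (tildeF S) c))))) ∧
    ((∀ c : C, IsIso (M.map (homOfLE (alphaF_le (tildeF S) c))))
      ↔ ∃ N : C ⥤ ModuleCat R, Nonempty ((alphaF_mono (tildeF S)).functor ⋙ N ≅ M)) := by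
  constructor
  · constructor
    · intro h1 c
      exact h1 _ _ (alphaF_le (tildeF S) c) (setA S c)
    · intro h2 c d hcd hset
      have hα : alphaF (tildeF S) c = alphaF (tildeF S) d := alphaF_tildeF_congr hset
      have i1 := h2 c
      have i2 := h2 d
      have hle : alphaF (tildeF S) c ≤ d := (alphaF_le (tildeF S) c).trans hcd
      have i3 : IsIso (M.map (homOfLE hle)) := by
        rw [show (homOfLE hle) = eqToHom hα ≫ homOfLE (alphaF_le (tildeF S) d) from
          Subsingleton.elim _ _, M.map_comp, eqToHom_map]
        infer_instance
      have key : M.map (homOfLE hcd) =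
          inv (M.map (homOfLE (alphaF_le (tildeF S) c))) ≫ M.map (homOfLE hle) := by
        rw [IsIso.eq_inv_comp, ← M.map_comp]
        congr 1
      rw [key]
      infer_instance
  · constructor
    · intro h2
      refine ⟨M, ⟨NatIso.ofComponents
        (fun c => @asIso _ _ _ _ (M.map (homOfLE (alphaF_le (tildeF S) c))) (h2 c))
        (fun {c d} f => ?_)⟩⟩
      simp only [Functor.comp_map, asIso_hom]
      exact (M.map_comp _ _).symm.trans ((congrArg M.map (Subsingleton.elim _ _)).trans (M.map_comp _ _))
    · rintro ⟨N, ⟨e⟩⟩ c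
      have hnat := e.hom.naturality (homOfLE (alphaF_le (tildeF S) c))
      have hmap : M.map (homOfLE (alphaF_le (tildeF S) c)) =
          inv (e.hom.app (alphaF (tildeF S) c)) ≫
            ((alphaF_mono (tildeF S)).functor ⋙ N).map (homOfLE (alphaF_le (tildeF S) c)) ≫
            e.hom.app c := by
        rw [IsIso.eq_inv_comp, hnat]
      have iN : IsIso (((alphaF_mono (tildeF S)).functor ⋙ N).map
          (homOfLE (alphaF_le (tildeF S) c))) := by
        simp only [Functor.comp_map]
        rw [show ((alphaF_mono (tildeF S)).functor.map (homOfLE (alphaF_le (tildeF S) c)))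
          = eqToHom (alphaF_idem (tildeF S) c) from Subsingleton.elim _ _]
        haveI : IsIso (eqToHom (alphaF_idem (tildeF S) c)) := Iso.isIso_hom (eqToIso (alphaF_idem (tildeF S) c))
        exact Functor.map_isIso (F := N) (f := eqToHom (alphaF_idem (tildeF S) c))
      rw [hmap]
      infer_instance
end

section
/- Let S = S₁ × ⋯ × Sₙ ⊆ Z̄ⁿ be a finite cartesian subset, S̄ = ∏ᵢ (Sᵢ ∪ {−∞}), and α : Z̄ⁿ → S̄ the map α(c) = sup(S̄ ∩ ↓c). For every c ∈ Z̄ⁿ there exists c' ∈ ℤⁿ with c ≤ c' and α(d) = α(c) for all d with c ≤ d ≤ c'. Consequently, for any functor N from S̄ to R-modules, the limit of N(α(d)) over d ∈ ℤⁿ with d ≥ c is isomorphic to N(α(c)). -/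
open Finset CategoryTheory

attribute [local instance 2000] Preorder.smallCategory

set_option linter.unusedSectionVars false

variable {C : Type*} [SemilatticeSup C] [OrderBot C] [DecidableEq C]

/-- The inclusion `ℤⁿ → Z̄ⁿ`. -/
def embZ {n : ℕ} (d : Fin n → ℤ) : Fin n → WithBot ℤ := fun i => (d i : WithBot ℤ)

lemma embZ_mono {n : ℕ} : Monotone (embZ (n := n)) :=
  fun _ _ h i => WithBot.coe_le_coe.mpr (h i)

/-- The poset of integer points above `c`. -/
def upInt {n : ℕ} (c : Fin n → WithBot ℤ) : Type := {d : Fin n → ℤ // c ≤ embZ d}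

noncomputable instance {n : ℕ} (c : Fin n → WithBot ℤ) : Preorder (upInt c) :=
  Subtype.preorder _

lemma upInt_mono {n : ℕ} (c : Fin n → WithBot ℤ) :
    Monotone (fun d : upInt c => embZ d.1) := fun _ _ h => embZ_mono h

/-- The canonical cone over the diagram `d ↦ N(α(d))`, `d ∈ ℤⁿ`, `d ≥ c`, with apex `N(α(c))`. -/
noncomputable def coneN {n : ℕ} (R : Type) [CommRing R] (Sbar : Finset (Fin n → WithBot ℤ))
    (N : (Fin n → WithBot ℤ) ⥤ ModuleCat R) (c : Fin n → WithBot ℤ) :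
    Limits.Cone ((upInt_mono c).functor ⋙ (alphaF_mono Sbar).functor ⋙ N) where
  pt := N.obj (alphaF Sbar c)
  π :=
    { app := fun d => N.map (homOfLE (alphaF_mono Sbar d.2))
      naturality := fun d e f => by
        simp only [Functor.const_obj_map, Category.id_comp, Functor.comp_map, ← N.map_comp]
        congr 1 }

lemma alphaF_eq_of (S : Finset C) {c d : C} (h : c ≤ d)
    (H : ∀ x ∈ S, x ≤ d → x ≤ c) : alphaF S d = alphaF S c := by
  classical
  unfold alphaF
  apply le_antisymm
  · refine Finset.sup_le fun x hx => ?_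
    obtain ⟨h1, h2⟩ := Finset.mem_filter.mp hx
    exact Finset.le_sup (f := id) (Finset.mem_filter.mpr ⟨h1, H x h1 h2⟩)
  · exact Finset.sup_mono (Finset.monotone_filter_right S (fun x _ hx => le_trans hx h))

lemma exists_c' (n : ℕ) (Si : Fin n → Finset (WithBot ℤ)) (c : Fin n → WithBot ℤ) :
    ∃ c' : Fin n → ℤ, c ≤ embZ c' ∧ ∀ d : Fin n → WithBot ℤ, c ≤ d → d ≤ embZ c' →
      alphaF (Fintype.piFinset (fun i => insert ⊥ (Si i))) d
        = alphaF (Fintype.piFinset (fun i => insert ⊥ (Si i))) c := by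
  classical
  set b : Fin n → ℤ := fun i =>
    -(((Si i).sup (fun x => (WithBot.unbotD 0 x).natAbs) : ℕ) : ℤ) - 1 with hb
  -- every finite element of Si i is > b i
  have hbl : ∀ i (k : ℤ), (k : WithBot ℤ) ∈ Si i → ¬ (k ≤ b i) := by
    intro i k hk hle
    have h1 : k.natAbs ≤ (Si i).sup (fun x => (WithBot.unbotD 0 x).natAbs) := by
      have := Finset.le_sup (f := fun x : WithBot ℤ => (WithBot.unbotD 0 x).natAbs) hk
      simpa using this
    have h2 : -(((Si i).sup (fun x => (WithBot.unbotD 0 x).natAbs) : ℕ) : ℤ) ≤ k := by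
      have h3 : (k.natAbs : ℤ) ≤ _ := Int.ofNat_le.mpr h1
      have habs : -(k.natAbs : ℤ) ≤ k := by
        rw [← Int.abs_eq_natAbs]
        exact neg_abs_le k
      omega
    simp only [hb] at hle
    omega
  refine ⟨fun i => WithBot.unbotD (b i) (c i), ?_, ?_⟩
  · intro i
    cases hci : c i with
    | bot => exact bot_le
    | coe m => simp [embZ, hci]
  · intro d hcd hdc'
    refine alphaF_eq_of _ hcd ?_
    intro x hx hxd
    intro i
    have hxi : x i ∈ insert ⊥ (Si i) := Fintype.mem_piFinset.mp hx i
    have hxd' : x i ≤ ((WithBot.unbotD (b i) (c i) : ℤ) : WithBot ℤ) := le_trans (hxd i) (hdc' i)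
    cases hci : c i with
    | bot =>
      simp only [hci, WithBot.unbotD_bot] at hxd'
      rcases Finset.mem_insert.mp hxi with h | h
      · simp [h]
      · cases hxk : x i with
        | bot => simp
        | coe k =>
          rw [hxk] at hxd' h
          exact absurd (WithBot.coe_le_coe.mp hxd') (hbl i k h)
    | coe m =>
      simp only [hci] at hxd'
      simpa using hxd'

lemma preorder_hom_eq {P : Type*} [Preorder P] {a b : P} (h : a = b) (f : a ⟶ b) :
    f = eqToHom h := by
  subst h
  apply Subsingleton.elim

theorem stmt9 (n : ℕ) (R : Type) [CommRing R] (Si : Fin n → Finset (WithBot ℤ))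
    (N : (Fin n → WithBot ℤ) ⥤ ModuleCat R) (c : Fin n → WithBot ℤ) :
    (∃ c' : Fin n → ℤ, c ≤ embZ c' ∧
      ∀ d : Fin n → ℤ, c ≤ embZ d → embZ d ≤ embZ c' →
        alphaF (Fintype.piFinset (fun i => insert ⊥ (Si i))) (embZ d)
          = alphaF (Fintype.piFinset (fun i => insert ⊥ (Si i))) c) ∧
    Nonempty (Limits.IsLimit (coneN R (Fintype.piFinset (fun i => insert ⊥ (Si i))) N c)) := by
  classical
  obtain ⟨c', hc', hα⟩ := exists_c' n Si c
  set Sbar := Fintype.piFinset (fun i => insert ⊥ (Si i)) with hSbar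
  refine ⟨⟨c', hc', fun d h1 h2 => hα _ h1 h2⟩, ⟨?_⟩⟩
  set F := (upInt_mono c).functor ⋙ (alphaF_mono Sbar).functor ⋙ N with hF
  have h₀ : alphaF Sbar (embZ c') = alphaF Sbar c := hα _ hc' le_rfl
  let d₀ : upInt c := ⟨c', hc'⟩
  -- auxiliary: for any j, the min of j and c'
  have key : ∀ (s : Limits.Cone F) (j : upInt c),
      (s.π.app d₀ ≫ eqToHom (congrArg N.obj h₀)) ≫ (coneN R Sbar N c).π.app j
        = s.π.app j := by
    intro s j
    set m : upInt c := ⟨fun i => min (j.1 i) (c' i), by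
      intro i
      have : ((min (j.1 i) (c' i) : ℤ) : WithBot ℤ) = min ((j.1 i : WithBot ℤ)) (c' i) :=
        WithBot.coe_min _ _
      show c i ≤ ((min (j.1 i) (c' i) : ℤ) : WithBot ℤ)
      rw [this]
      exact le_min (j.2 i) (hc' i)⟩ with hm
    have hmj : m ≤ j := fun i => min_le_left _ _
    have hmd : m ≤ d₀ := fun i => min_le_right _ _
    have hαm : alphaF Sbar (embZ m.1) = alphaF Sbar c :=
      hα _ m.2 (fun i => WithBot.coe_le_coe.mpr (min_le_right _ _))
    have w1 := s.w (homOfLE hmd)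
    have e1 : F.map (homOfLE hmd) = N.map (eqToHom (hαm.trans h₀.symm)) := by
      show N.map _ = N.map _
      exact congrArg N.map (Subsingleton.elim _ _)
    rw [e1] at w1
    have papp : s.π.app d₀ = s.π.app m ≫ N.map (eqToHom (hαm.trans h₀.symm)) := w1.symm
    have comb : N.map (eqToHom (hαm.trans h₀.symm)) ≫ eqToHom (congrArg N.obj h₀)
        ≫ N.map (homOfLE (alphaF_mono Sbar j.2)) = F.map (homOfLE hmj) := by
      rw [← eqToHom_map N h₀, ← N.map_comp, ← N.map_comp]
      show N.map _ = N.map _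
      exact congrArg N.map (Subsingleton.elim _ _)
    show (s.π.app d₀ ≫ eqToHom (congrArg N.obj h₀))
        ≫ N.map (homOfLE (alphaF_mono Sbar j.2)) = s.π.app j
    simp only [papp, Category.assoc, comb]
    exact ((Category.assoc _ _ _).trans (Category.assoc _ _ _)).trans
      ((congrArg (s.π.app m ≫ ·) comb).trans (s.w (homOfLE hmj)))
  refine Limits.IsLimit.mk (fun s => s.π.app d₀ ≫ eqToHom (congrArg N.obj h₀)) key ?_
  intro s mo hmo
  have := hmo d₀
  have e0 : (coneN R Sbar N c).π.app d₀ = eqToHom (congrArg N.obj h₀.symm) := by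
    show N.map _ = _
    exact (congrArg N.map (preorder_hom_eq h₀.symm (homOfLE (alphaF_mono Sbar d₀.2)))).trans (eqToHom_map N _)
  rw [e0] at this
  show mo = s.π.app d₀ ≫ eqToHom (congrArg N.obj h₀)
  rw [← this]
  exact ((Category.assoc _ _ _).trans ((congrArg (mo ≫ ·)
    ((eqToHom_trans _ _).trans (eqToHom_refl _ _))).trans (Category.comp_id mo))).symm
end

section
/- Let M be a functor ℤⁿ → R-Mod, a ≤ b in ℤⁿ, u = (1,…,1). If M is [a+u,b]-determined (i.e. supp(M) ⊆ ↑(a+u) and for all c ≤ d in ℤⁿ with [a+u,b] ∩ ↓c = [a+u,b] ∩ ↓d, the map M(c ≤ d) is an isomorphism), then M ≅ res_π res_{[a,b]} M where π : ℤⁿ → [a,b] is the convex projection; i.e. M(π(c) ≤ c) : M(π(c)) → M(c) is an isomorphism for all c in the support, and M(c) = 0 = M(π(c)) otherwise. Conversely, if supp(M) ⊆ ↑a and M ≅ res_π res_{[a,b]} M, then M is [a+u,b]-determined. -/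
open Finset CategoryTheory

attribute [local instance 2000] Preorder.smallCategory

set_option linter.unusedSectionVars false
set_option synthInstance.maxHeartbeats 1000000
set_option maxHeartbeats 1000000

/-- `Mbar` is the canonical extension of `M` to `Z̄ⁿ`: it restricts to `M` on `ℤⁿ`, and
at every `c ∈ Z̄ⁿ` it is the limit `lim_{d ≥ c, d ∈ ℤⁿ} M(d)`, expressed elementwise. -/
def IsExtension {n : ℕ} {R : Type} [CommRing R] (M : (Fin n → ℤ) ⥤ ModuleCat R)
    (Mbar : (Fin n → WithBot ℤ) ⥤ ModuleCat R) : Prop :=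
  (embZ_mono.functor ⋙ Mbar = M) ∧
  ∀ c : Fin n → WithBot ℤ,
    (∀ x y : Mbar.obj c,
      (∀ (d : Fin n → ℤ) (h : c ≤ embZ d),
        Mbar.map (homOfLE h) x = Mbar.map (homOfLE h) y) → x = y) ∧
    (∀ f : ∀ d : Fin n → ℤ, c ≤ embZ d → Mbar.obj (embZ d),
      (∀ (d e : Fin n → ℤ) (hd : c ≤ embZ d) (he : c ≤ embZ e) (hde : d ≤ e),
        Mbar.map (homOfLE (embZ_mono hde)) (f d hd) = f e he) →
      ∃ x : Mbar.obj c, ∀ (d : Fin n → ℤ) (h : c ≤ embZ d), Mbar.map (homOfLE h) x = f d h)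

/-- `M` is `S`-determined: the support of `M` is contained in the upset generated by `S`,
and whenever `c ≤ d` with `S ∩ ↓c = S ∩ ↓d`, the structure map `M(c ≤ d)` is an isomorphism. -/
def SDet {C : Type*} [Preorder C] {R : Type} [CommRing R] (S : Set C) (M : C ⥤ ModuleCat R) :
    Prop :=
  (∀ c : C, (∃ x : M.obj c, x ≠ 0) → ∃ s ∈ S, s ≤ c) ∧
  ∀ (c d : C) (h : c ≤ d),
    S ∩ {x | x ≤ c} = S ∩ {x | x ≤ d} → IsIso (M.map (homOfLE h))

/-- The convex projection `ℤⁿ → [a,b]`. -/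
def proj {n : ℕ} (a b : Fin n → ℤ) (c : Fin n → ℤ) : Fin n → ℤ :=
  fun i => max (a i) (min (c i) (b i))

lemma proj_mono {n : ℕ} (a b : Fin n → ℤ) : Monotone (proj a b) :=
  fun _ _ h i => max_le_max le_rfl (min_le_min (h i) le_rfl)

/-- The interval `[a,b]` of `Z̄ⁿ` with infinitary points added:
in each coordinate either `−∞` or an integer of `[aᵢ, bᵢ]`. -/
def barIcc {n : ℕ} (a b : Fin n → ℤ) : Set (Fin n → WithBot ℤ) :=
  {c | ∀ i, c i = ⊥ ∨ ((a i : WithBot ℤ) ≤ c i ∧ c i ≤ (b i : WithBot ℤ))}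

/-- The representable module `R[Mor(s, −)]`. -/
noncomputable def RepM {C : Type} [Preorder C] (R : Type) [CommRing R] (s : C) :
    C ⥤ ModuleCat R :=
  coyoneda.obj (Opposite.op s) ⋙ ModuleCat.free R

/-- A functor module is finitely presented if it admits a presentation
`K → N → M → 0` by finite direct sums of representables. -/
noncomputable def FinPres {C : Type} [Preorder C] {R : Type} [CommRing R]
    (M : C ⥤ ModuleCat R) : Prop :=
  ∃ (p q : ℕ) (s : Fin p → C) (t : Fin q → C)
    (f : (∐ fun i => RepM R (s i)) ⟶ M)
    (g : (∐ fun j => RepM R (t j)) ⟶ (∐ fun i => RepM R (s i)))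
    (w : g ≫ f = 0), Epi f ∧ Epi (Limits.kernel.lift f g w)

private lemma zeroIsoAux {R : Type} [CommRing R] {A B : ModuleCat R} (f : A ⟶ B)
    (h : ∀ x : A, x = 0) (h' : ∀ x : B, x = 0) : IsIso f := by
  rw [ConcreteCategory.isIso_iff_bijective]
  exact ⟨fun x y _ => (h x).trans (h y).symm, fun y => ⟨0, (h' _).trans (h' y).symm⟩⟩

theorem stmt11 (n : ℕ) (R : Type) [CommRing R] (a b : Fin n → ℤ) (hab : a ≤ b)
    (M : (Fin n → ℤ) ⥤ ModuleCat R) :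
    (SDet (Set.Icc (a + 1) b) M → Nonempty ((proj_mono a b).functor ⋙ M ≅ M)) ∧
    ((∀ c : Fin n → ℤ, (∃ x : M.obj c, x ≠ 0) → a ≤ c) →
      Nonempty ((proj_mono a b).functor ⋙ M ≅ M) → SDet (Set.Icc (a + 1) b) M) := by
  constructor
  · rintro ⟨hsupp, hdet⟩
    have key : ∀ (c d : Fin n → ℤ) (hcd : c ≤ d),
        (∀ s : Fin n → ℤ, a + 1 ≤ s → s ≤ b → s ≤ d → s ≤ c) →
        IsIso (M.map (homOfLE hcd)) := by
      intro c d hcd hs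
      apply hdet c d hcd
      apply Set.ext
      intro s
      exact ⟨fun ⟨hS, hle⟩ => ⟨hS, le_trans hle hcd⟩,
             fun ⟨hS, hle⟩ => ⟨hS, hs s hS.1 hS.2 hle⟩⟩
    have h1 : ∀ c : Fin n → ℤ, c ≤ (fun i => max (c i) (a i)) := fun c i => le_max_left _ _
    have h2 : ∀ c : Fin n → ℤ, proj a b c ≤ (fun i => max (c i) (a i)) := fun c i =>
      max_le (le_max_right _ _) (le_trans (min_le_left _ _) (le_max_left _ _))
    have I1 : ∀ c : Fin n → ℤ, IsIso (M.map (homOfLE (h1 c))) := by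
      intro c
      apply key
      intro s hs1 hs2 hs3
      refine Pi.le_def.mpr fun i => ?_
      have e1 : (a i : ℤ) + 1 ≤ s i := hs1 i
      have e3 : s i ≤ max (c i) (a i) := hs3 i
      omega
    have I2 : ∀ c : Fin n → ℤ, IsIso (M.map (homOfLE (h2 c))) := by
      intro c
      apply key
      intro s hs1 hs2 hs3
      refine Pi.le_def.mpr fun i => ?_
      have e1 : (a i : ℤ) + 1 ≤ s i := hs1 i
      have e2 : s i ≤ b i := hs2 i
      have e3 : s i ≤ max (c i) (a i) := hs3 i
      show s i ≤ max (a i) (min (c i) (b i))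
      omega
    refine ⟨NatIso.ofComponents (fun c =>
      (@asIso _ _ _ _ (M.map (homOfLE (h2 c))) (I2 c)) ≪≫
      (@asIso _ _ _ _ (M.map (homOfLE (h1 c))) (I1 c)).symm) ?_⟩
    intro c d f
    haveI := I1 c; haveI := I1 d; haveI := I2 c; haveI := I2 d
    have hcd : c ≤ d := leOfHom f
    have hmm : (fun i => max (c i) (a i)) ≤ (fun i => max (d i) (a i)) :=
      fun i => max_le_max (hcd i) le_rfl
    simp only [Iso.trans_hom, asIso_hom, Iso.symm_hom, asIso_inv, Functor.comp_map]
    haveI hm : Mono (M.map (homOfLE (h1 d))) := IsIso.mono_of_iso _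
    rw [← cancel_mono (M.map (homOfLE (h1 d)))]
    simp only [Category.assoc, IsIso.inv_hom_id, Category.comp_id]
    have e1 : M.map f ≫ M.map (homOfLE (h1 d)) =
        M.map (homOfLE (h1 c)) ≫ M.map (homOfLE hmm) := by
      rw [← M.map_comp, ← M.map_comp]
      exact congrArg M.map (Subsingleton.elim _ _)
    rw [e1, IsIso.inv_hom_id_assoc]
    exact (M.map_comp _ _).symm.trans
      ((congrArg M.map (Subsingleton.elim _ _)).trans (M.map_comp _ _))
  · rintro hsupp ⟨η⟩
    have surj0 : ∀ c : Fin n → ℤ, (∀ w : M.obj (proj a b c), w = 0) →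
        ∀ v : M.obj c, v = 0 := by
      intro c h0 v
      have hv : η.hom.app c (η.inv.app c v) = v :=
        congrArg (fun (f : M.obj c ⟶ M.obj c) => f v) (η.inv_hom_id_app c)
      rw [← hv, h0 (η.inv.app c v)]
      exact map_zero (η.hom.app c).hom
    have inj0 : ∀ c : Fin n → ℤ, (∀ v : M.obj c, v = 0) →
        ∀ w : M.obj (proj a b c), w = 0 := by
      intro c h0 w
      have hw : η.inv.app c (η.hom.app c w) = w :=
        congrArg (fun (f : ((proj_mono a b).functor ⋙ M).obj c ⟶
          ((proj_mono a b).functor ⋙ M).obj c) => f w) (η.hom_inv_id_app c)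
      rw [← hw, h0 (η.hom.app c w)]
      exact map_zero (η.inv.app c).hom
    have L : ∀ c : Fin n → ℤ, (∃ v : M.obj c, v ≠ 0) → a + 1 ≤ c := by
      intro c hc
      refine Pi.le_def.mpr fun i => ?_
      simp only [Pi.add_apply, Pi.one_apply]
      by_contra hlt
      have hac : a ≤ c := hsupp c hc
      have haci : a i ≤ c i := hac i
      have hci : c i = a i := le_antisymm (by omega) haci
      set y := Function.update c i (a i - 1) with hy
      have hyi : y i = a i - 1 := Function.update_self i _ c
      have hyj : ∀ j, j ≠ i → y j = c j := fun j hj => Function.update_of_ne hj _ _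
      have hy0 : ∀ v : M.obj y, v = 0 := by
        intro v
        by_contra hv
        have h : a i ≤ y i := hsupp y ⟨v, hv⟩ i
        rw [hyi] at h
        omega
      have hpe : proj a b y = proj a b c := by
        funext j
        show max (a j) (min (y j) (b j)) = max (a j) (min (c j) (b j))
        by_cases hj : j = i
        · subst hj
          rw [hyi, hci]
          have := hab j
          omega
        · rw [hyj j hj]
      have hπ0 : ∀ w : M.obj (proj a b y), w = 0 := inj0 y hy0
      rw [hpe] at hπ0
      obtain ⟨v, hv⟩ := hc
      exact hv (surj0 c hπ0 v)
    have Lb : ∀ c : Fin n → ℤ, (∃ v : M.obj c, v ≠ 0) → a + 1 ≤ b := by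
      intro c hc
      obtain ⟨v, hv⟩ := hc
      have hw : (η.inv.app c) v ≠ 0 := by
        intro h0
        apply hv
        have hv2 : η.hom.app c (η.inv.app c v) = v :=
          congrArg (fun (f : M.obj c ⟶ M.obj c) => f v) (η.inv_hom_id_app c)
        rw [← hv2, h0, map_zero]
      have hL := L (proj a b c) ⟨η.inv.app c v, hw⟩
      refine Pi.le_def.mpr fun i => ?_
      have e : (a i : ℤ) + 1 ≤ max (a i) (min (c i) (b i)) := hL i
      simp only [Pi.add_apply, Pi.one_apply]
      omega
    constructor
    · intro c hc
      exact ⟨a + 1, ⟨le_refl _, Lb c hc⟩, L c hc⟩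
    · intro c d hcd hSeq
      have projeq : (∃ v : M.obj d, v ≠ 0) ∨ (∃ v : M.obj c, v ≠ 0) →
          proj a b c = proj a b d := by
        intro hor
        have hd1 : a + 1 ≤ d := by
          rcases hor with h | h
          · exact L d h
          · exact le_trans (L c h) hcd
        have hb1 : a + 1 ≤ b := by
          rcases hor with h | h
          · exact Lb d h
          · exact Lb c h
        have hmem : (fun i => min (d i) (b i)) ∈ Set.Icc (a + 1) b ∩ {x | x ≤ d} := by
          refine ⟨⟨Pi.le_def.mpr fun i => ?_, fun i => min_le_right _ _⟩,
            fun i => min_le_left _ _⟩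
          have e3 : (a i : ℤ) + 1 ≤ d i := hd1 i
          have e4 : (a i : ℤ) + 1 ≤ b i := hb1 i
          simp only [Pi.add_apply, Pi.one_apply]
          omega
        have hsc : (fun i => min (d i) (b i)) ≤ c := by
          rw [← hSeq] at hmem
          exact hmem.2
        funext i
        have e1 : min (d i) (b i) ≤ c i := hsc i
        have e2 : c i ≤ d i := hcd i
        have e3 : (a i : ℤ) + 1 ≤ d i := hd1 i
        have e4 : (a i : ℤ) + 1 ≤ b i := hb1 i
        show max (a i) (min (c i) (b i)) = max (a i) (min (d i) (b i))
        omega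
      by_cases hd : ∃ v : M.obj d, v ≠ 0
      · have hpe := projeq (Or.inl hd)
        have hnat := η.hom.naturality (homOfLE hcd)
        have heq : M.map (homOfLE hcd) =
            η.inv.app c ≫ ((proj_mono a b).functor ⋙ M).map (homOfLE hcd) ≫ η.hom.app d := by
          rw [hnat, ← Category.assoc, Iso.inv_hom_id_app, Category.id_comp]
        haveI hiso1 : IsIso (η.inv.app c) :=
          ⟨⟨η.hom.app c, η.inv_hom_id_app c, η.hom_inv_id_app c⟩⟩
        haveI hiso2 : IsIso (((proj_mono a b).functor ⋙ M).map (homOfLE hcd)) := by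
          have hmapeq : (proj_mono a b).functor.map (homOfLE hcd) =
              (eqToHom hpe : (proj a b c : Fin n → ℤ) ⟶ proj a b d) := Subsingleton.elim _ _
          show IsIso (M.map ((proj_mono a b).functor.map (homOfLE hcd)))
          haveI : IsIso ((proj_mono a b).functor.map (homOfLE hcd)) :=
            ⟨⟨homOfLE (le_of_eq hpe.symm), Subsingleton.elim _ _, Subsingleton.elim _ _⟩⟩
          infer_instance
        rw [heq]
        infer_instance
      · push_neg at hd
        have hc0 : ∀ v : M.obj c, v = 0 := by
          by_contra hc
          push_neg at hc
          obtain ⟨v, hv⟩ := hc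
          have hpe := projeq (Or.inr ⟨v, hv⟩)
          have hπ0 : ∀ w : M.obj (proj a b d), w = 0 := inj0 d (fun v => hd v)
          rw [← hpe] at hπ0
          exact hv (surj0 c hπ0 v)
        exact zeroIsoAux _ hc0 (fun v => hd v)
end

section
/- Let M be a functor ℤⁿ → R-Mod whose extension M̄ to Z̄ⁿ (defined by M̄(c) = lim_{d ≥ c, d ∈ ℤⁿ} M(d)) is [a+u,b]̄-determined, where u = (1,…,1) and [a+u,b]̄ = ∏ᵢ ([aᵢ+1,bᵢ] ∪ {−∞}). Then for every c ∈ [a,b]̄ := ∏ᵢ([aᵢ,bᵢ] ∪ {−∞}), the map M̄(c ≤ β(c)) : M̄(c) → M(β(c)) is an isomorphism, where β(c)ᵢ = aᵢ if cᵢ = −∞ and β(c)ᵢ = cᵢ otherwise. In particular it suffices to show [a+u,b]̄ ∩ ↓c = [a+u,b]̄ ∩ ↓β(c). -/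
open Finset CategoryTheory

attribute [local instance 2000] Preorder.smallCategory

set_option linter.unusedSectionVars false
set_option synthInstance.maxHeartbeats 1000000
set_option maxHeartbeats 1000000

/-- `β(c)`: replace each `−∞` coordinate of `c` by the corresponding coordinate of `a`. -/
def bfloor {n : ℕ} (a : Fin n → ℤ) (c : Fin n → WithBot ℤ) : Fin n → ℤ :=
  fun i => WithBot.unbotD (a i) (c i)

lemma le_bfloor {n : ℕ} (a : Fin n → ℤ) (c : Fin n → WithBot ℤ) :
    c ≤ embZ (bfloor a c) := by
  intro i
  cases hc : c i with
  | bot => simp [embZ, bfloor, hc]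
  | coe m => simp [embZ, bfloor, hc]

theorem stmt12 (n : ℕ) (R : Type) [CommRing R] (a b : Fin n → ℤ) (hab : a ≤ b)
    (M : (Fin n → ℤ) ⥤ ModuleCat R) (Mbar : (Fin n → WithBot ℤ) ⥤ ModuleCat R)
    (hext : IsExtension M Mbar)
    (hdet : SDet (barIcc (a + 1) b) Mbar) :
    ∀ c ∈ barIcc a b,
      (barIcc (a + 1) b ∩ {x | x ≤ c} = barIcc (a + 1) b ∩ {x | x ≤ embZ (bfloor a c)}) ∧
      IsIso (Mbar.map (homOfLE (le_bfloor a c))) := by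
  intro c hc
  have key : barIcc (a + 1) b ∩ {x | x ≤ c}
      = barIcc (a + 1) b ∩ {x | x ≤ embZ (bfloor a c)} := by
    ext x
    simp only [Set.mem_inter_iff, Set.mem_setOf_eq]
    constructor
    · rintro ⟨hx, hxc⟩
      refine ⟨hx, fun i => ?_⟩
      have hxi := hxc i
      cases hci : c i with
      | bot =>
        rw [hci, le_bot_iff] at hxi
        simp [embZ, bfloor, hci, hxi]
      | coe m =>
        rw [hci] at hxi
        simpa [embZ, bfloor, hci] using hxi
    · rintro ⟨hx, hxc⟩
      refine ⟨hx, fun i => ?_⟩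
      have hxi := hxc i
      cases hci : c i with
      | bot =>
        rcases hx i with h | ⟨h1, h2⟩
        · simp [h, hci]
        · exfalso
          simp only [embZ, bfloor, hci, WithBot.unbotD_bot] at hxi
          have : ((a i + 1 : ℤ) : WithBot ℤ) ≤ ((a i : ℤ) : WithBot ℤ) := by
            refine le_trans ?_ hxi
            simpa [Pi.add_apply] using h1
          exact absurd (WithBot.coe_le_coe.mp this) (by omega)
      | coe m =>
        simpa [embZ, bfloor, hci] using hxi
  exact ⟨key, hdet.2 c _ (le_bfloor a c) key⟩
end

section
/- Let M be an Rℤⁿ-module encoded by the convex projection π : ℤⁿ → [a,b] (i.e. M(π(c) ≤ c) is an isomorphism for all c ∈ ℤⁿ). Then its extension M̄ to Z̄ⁿ, M̄(c) = lim_{d ≥ c, d ∈ ℤⁿ} M(d), is [a+u,b]̄-determined, where u = (1,…,1) and [a+u,b]̄ = ∏ᵢ([aᵢ+1,bᵢ] ∪ {−∞}): for all c ≤ d in Z̄ⁿ with [a+u,b]̄ ∩ ↓c = [a+u,b]̄ ∩ ↓d, the map M̄(c ≤ d) is an isomorphism, and supp(M̄) ⊆ ↑[a+u,b]̄ (which is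 all of Z̄ⁿ). -/
open Finset CategoryTheory

attribute [local instance 2000] Preorder.smallCategory

set_option linter.unusedSectionVars false
set_option synthInstance.maxHeartbeats 1000000
set_option maxHeartbeats 1000000

-- AUXILIARY DEVELOPMENT (to be inserted before stmt14)
/-- Per-coordinate clamp `Z̄ → [a,b]` (with `⊥ ↦ a`). -/
def kap (ai bi : ℤ) (z : WithBot ℤ) : ℤ := max ai (min (z.unbotD ai) bi)

lemma kap_bot (ai bi : ℤ) : kap ai bi ⊥ = ai := by
  simp only [kap, WithBot.unbotD_bot]; omega

lemma kap_mono (ai bi : ℤ) : Monotone (kap ai bi) := by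
  intro z w h
  cases z with
  | bot => rw [kap_bot]; exact le_max_left _ _
  | coe m =>
    cases w with
    | bot => exact absurd h (by simp)
    | coe k =>
      have := WithBot.coe_le_coe.mp h
      simp only [kap, WithBot.unbotD_coe]; omega

lemma mapsq {n : ℕ} {R : Type} [CommRing R] (Mbar : (Fin n → WithBot ℤ) ⥤ ModuleCat R)
    {u v w : Fin n → WithBot ℤ} (h1 : u ≤ v) (h2 : v ≤ w) (x : Mbar.obj u) :
    Mbar.map (homOfLE h2) (Mbar.map (homOfLE h1) x)
      = Mbar.map (homOfLE (h1.trans h2)) x := by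
  rw [show homOfLE (h1.trans h2) = homOfLE h1 ≫ homOfLE h2 from rfl, Mbar.map_comp]
  simp

/-- Structure maps of `Mbar` between embedded integer points with the same projection
are bijective. -/
lemma mapEmb_bij {n : ℕ} {R : Type} [CommRing R] (a b : Fin n → ℤ)
    (M : (Fin n → ℤ) ⥤ ModuleCat R) (Mbar : (Fin n → WithBot ℤ) ⥤ ModuleCat R)
    (hM : embZ_mono.functor ⋙ Mbar = M)
    (η : (proj_mono a b).functor ⋙ M ≅ M)
    {e e' : Fin n → ℤ} (h : e ≤ e') (hp : proj a b e = proj a b e') :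
    Function.Bijective (Mbar.map (homOfLE (embZ_mono h))) := by
  haveI h1 : IsIso (M.map (homOfLE h)) := by
    rw [← NatIso.isIso_map_iff η (homOfLE h)]
    show IsIso (M.map ((proj_mono a b).functor.map (homOfLE h)))
    have hFm : (proj_mono a b).functor.map (homOfLE h) = eqToHom hp := Subsingleton.elim _ _
    rw [hFm]; exact Functor.map_isIso M (eqToHom hp)
  have h4 := Functor.congr_hom hM (homOfLE h)
  have h5 : embZ_mono.functor.map (homOfLE h) = homOfLE (embZ_mono h) :=
    Subsingleton.elim _ _
  rw [show (embZ_mono.functor ⋙ Mbar).map (homOfLE h)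
      = Mbar.map (embZ_mono.functor.map (homOfLE h)) from rfl, h5] at h4
  haveI : IsIso (Mbar.map (homOfLE (embZ_mono h))) := by
    rw [show Mbar.map (homOfLE (embZ_mono h)) = _ from h4]
    refine IsIso.comp_isIso' ?_ (IsIso.comp_isIso' h1 ?_) <;> exact (eqToIso (by rw [← hM]; rfl)).isIso_hom
  exact ConcreteCategory.bijective_of_isIso (Mbar.map (homOfLE (embZ_mono h)))

/-- Key lemma: if `t ≥ c` is an integer point such that every integer point between `c`
and `t` has the same projection as `t`, then `Mbar (c ≤ t)` is bijective. -/
lemma key_bij {n : ℕ} {R : Type} [CommRing R] (a b : Fin n → ℤ)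
    (M : (Fin n → ℤ) ⥤ ModuleCat R) (Mbar : (Fin n → WithBot ℤ) ⥤ ModuleCat R)
    (hext : IsExtension M Mbar)
    (η : (proj_mono a b).functor ⋙ M ≅ M)
    (c : Fin n → WithBot ℤ) (t : Fin n → ℤ) (hct : c ≤ embZ t)
    (hmin : ∀ e : Fin n → ℤ, c ≤ embZ e → e ≤ t → proj a b e = proj a b t) :
    Function.Bijective (Mbar.map (homOfLE hct)) := by
  obtain ⟨hM, hlim⟩ := hext
  have hm : ∀ e : Fin n → ℤ, c ≤ embZ e → c ≤ embZ (e ⊓ t) := by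
    intro e he i
    show c i ≤ ((min (e i) (t i) : ℤ) : WithBot ℤ)
    rw [WithBot.coe_min]
    exact le_min (he i) (hct i)
  have hbijm : ∀ (e : Fin n → ℤ) (he : c ≤ embZ e),
      Function.Bijective (Mbar.map (homOfLE (embZ_mono (inf_le_right : e ⊓ t ≤ t)))) := by
    intro e he
    exact mapEmb_bij a b M Mbar hM η inf_le_right (hmin _ (hm e he) inf_le_right)
  constructor
  · intro x y hxy
    refine (hlim c).1 x y ?_
    intro e he
    have h1 : Mbar.map (homOfLE (hm e he)) x = Mbar.map (homOfLE (hm e he)) y := by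
      apply (hbijm e he).1
      rw [mapsq, mapsq]
      exact hxy
    have h2 := congrArg (Mbar.map (homOfLE (embZ_mono (inf_le_left : e ⊓ t ≤ e)))) h1
    rw [mapsq, mapsq] at h2
    exact h2
  · intro z
    have hGex : ∀ (e : Fin n → ℤ), c ≤ embZ e → ∃ g : Mbar.obj (embZ (e ⊓ t)),
        Mbar.map (homOfLE (embZ_mono (inf_le_right : e ⊓ t ≤ t))) g = z := fun e he =>
      (hbijm e he).2 z
    choose G hq using hGex
    set F : ∀ e : Fin n → ℤ, c ≤ embZ e → Mbar.obj (embZ e) := fun e he =>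
      Mbar.map (homOfLE (embZ_mono (inf_le_left : e ⊓ t ≤ e))) (G e he) with hF
    have hcompat : ∀ (d e : Fin n → ℤ) (hd : c ≤ embZ d) (he : c ≤ embZ e) (hde : d ≤ e),
        Mbar.map (homOfLE (embZ_mono hde)) (F d hd) = F e he := by
      intro d e hd he hde
      have hmm : d ⊓ t ≤ e ⊓ t := inf_le_inf_right t hde
      have hkey : Mbar.map (homOfLE (embZ_mono hmm)) (G d hd) = G e he := by
        apply (hbijm e he).1
        rw [mapsq, hq e he]
        exact hq d hd
      show Mbar.map _ (Mbar.map _ (G d hd)) = Mbar.map _ (G e he)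
      rw [mapsq, ← hkey, mapsq]
    obtain ⟨x, hx⟩ := (hlim c).2 F hcompat
    exact ⟨x, (hx t hct).trans (hq t hct)⟩

theorem stmt14 (n : ℕ) (R : Type) [CommRing R] (a b : Fin n → ℤ) (hab : a ≤ b)
    (M : (Fin n → ℤ) ⥤ ModuleCat R) (Mbar : (Fin n → WithBot ℤ) ⥤ ModuleCat R)
    (hext : IsExtension M Mbar)
    (henc : Nonempty ((proj_mono a b).functor ⋙ M ≅ M)) :
    SDet (barIcc (a + 1) b) Mbar := by
  obtain ⟨η⟩ := henc
  constructor
  · exact fun c _ => ⟨fun _ => ⊥, fun i => Or.inl rfl, fun i => bot_le⟩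
  intro c d h hS
  -- Step 1: extract per-coordinate clamp equality from hS
  have hK : ∀ i, kap (a i) (b i) (c i) = kap (a i) (b i) (d i) := by
    intro i
    by_contra hne
    have hlt : kap (a i) (b i) (c i) < kap (a i) (b i) (d i) :=
      lt_of_le_of_ne (kap_mono (a i) (b i) (h i)) hne
    have hac : a i ≤ kap (a i) (b i) (c i) := le_max_left _ _
    obtain ⟨k, hd⟩ : ∃ k : ℤ, d i = (k : WithBot ℤ) := by
      cases hd : d i with
      | bot => rw [hd, kap_bot] at hlt; omega
      | coe k => exact ⟨k, rfl⟩
    have hvdef : kap (a i) (b i) (d i) = max (a i) (min k (b i)) := by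
      rw [hd]; simp [kap]
    set v : ℤ := kap (a i) (b i) (d i) with hv
    have hav : a i < v := lt_of_le_of_lt hac hlt
    have hvb : v ≤ b i := by omega
    have hvk : v ≤ k := by omega
    set s : Fin n → WithBot ℤ :=
      Function.update (fun _ : Fin n => (⊥ : WithBot ℤ)) i ((v : ℤ) : WithBot ℤ) with hs
    have hsi : s i = ((v : ℤ) : WithBot ℤ) := Function.update_self _ _ _
    have hsj : ∀ j, j ≠ i → s j = ⊥ := fun j hj => Function.update_of_ne hj _ _
    have hsS : s ∈ barIcc (a + 1) b := by
      intro j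
      by_cases hj : j = i
      · subst hj
        right
        rw [hsi]
        refine ⟨?_, ?_⟩
        · rw [show (a + 1) j = a j + 1 from rfl]
          exact WithBot.coe_le_coe.mpr (by omega)
        · exact WithBot.coe_le_coe.mpr hvb
      · left; exact hsj j hj
    have hsd : s ≤ d := by
      intro j
      by_cases hj : j = i
      · subst hj
        rw [hsi, hd]
        exact WithBot.coe_le_coe.mpr hvk
      · rw [hsj j hj]; exact bot_le
    have hsc : s ≤ c := by
      have hmem : s ∈ barIcc (a + 1) b ∩ {x | x ≤ c} := by
        rw [hS]; exact ⟨hsS, hsd⟩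
      exact hmem.2
    have hci := hsc i
    rw [hsi] at hci
    cases hc : c i with
    | bot => rw [hc] at hci; exact absurd hci (by simp)
    | coe m =>
      rw [hc] at hci
      have hvm : v ≤ m := WithBot.coe_le_coe.mp hci
      have hcdef : kap (a i) (b i) (c i) = max (a i) (min m (b i)) := by
        rw [hc]; simp [kap]
      omega
  -- Step 2: build the common integer point e₁ above c and d with minimal projection
  set e₁ : Fin n → ℤ := fun i =>
    max (a i) (max ((c i).unbotD (a i)) ((d i).unbotD (a i))) with he₁
  have hce₁ : c ≤ embZ e₁ := by
    intro i
    cases hc : c i with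
    | bot => exact bot_le
    | coe k =>
      apply WithBot.coe_le_coe.mpr
      rw [he₁]; simp only
      rw [hc, WithBot.unbotD_coe]
      omega
  have hde₁ : d ≤ embZ e₁ := by
    intro i
    cases hd : d i with
    | bot => exact bot_le
    | coe k =>
      apply WithBot.coe_le_coe.mpr
      rw [he₁]; simp only
      rw [hd, WithBot.unbotD_coe]
      omega
  -- projection of e₁ equals the clamp of c (and of d)
  have hpe₁c : ∀ i, proj a b e₁ i = kap (a i) (b i) (c i) := by
    intro i
    have hk := hK i
    show max (a i) (min (e₁ i) (b i)) = _
    rw [he₁]; simp only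
    cases hc : c i with
    | bot =>
      rw [kap_bot, WithBot.unbotD_bot]
      cases hd : d i with
      | bot => rw [WithBot.unbotD_bot]; omega
      | coe m =>
        rw [WithBot.unbotD_coe]
        rw [hc, hd, kap_bot] at hk
        simp only [kap, WithBot.unbotD_coe] at hk
        omega
    | coe k =>
      rw [WithBot.unbotD_coe]
      cases hd : d i with
      | bot =>
        rw [WithBot.unbotD_bot]
        rw [hc, hd, kap_bot] at hk
        simp only [kap, WithBot.unbotD_coe] at hk ⊢
        omega
      | coe m =>
        rw [WithBot.unbotD_coe]
        rw [hc, hd] at hk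
        simp only [kap, WithBot.unbotD_coe] at hk ⊢
        omega
  have hpe₁d : ∀ i, proj a b e₁ i = kap (a i) (b i) (d i) := by
    intro i; rw [hpe₁c i, hK i]
  -- every integer point above c has projection ≥ clamp of c, coordinatewise
  have hlow : ∀ (x : Fin n → WithBot ℤ) (e : Fin n → ℤ), x ≤ embZ e →
      ∀ i, kap (a i) (b i) (x i) ≤ proj a b e i := by
    intro x e hxe i
    have := hxe i
    show _ ≤ max (a i) (min (e i) (b i))
    cases hx : x i with
    | bot => rw [kap_bot]; omega
    | coe k =>
      rw [hx] at this
      have hk := WithBot.coe_le_coe.mp this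
      simp only [kap, WithBot.unbotD_coe]
      omega
  have hminc : ∀ e : Fin n → ℤ, c ≤ embZ e → e ≤ e₁ → proj a b e = proj a b e₁ := by
    intro e hce hee₁
    funext i
    refine le_antisymm (proj_mono a b hee₁ i) ?_
    rw [hpe₁c i]
    exact hlow c e hce i
  have hmind : ∀ e : Fin n → ℤ, d ≤ embZ e → e ≤ e₁ → proj a b e = proj a b e₁ := by
    intro e hde hee₁
    funext i
    refine le_antisymm (proj_mono a b hee₁ i) ?_
    rw [hpe₁d i]
    exact hlow d e hde i
  -- Step 3: both maps to e₁ are bijective, hence the middle map is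
  have hbc := key_bij a b M Mbar hext η c e₁ hce₁ hminc
  have hbd := key_bij a b M Mbar hext η d e₁ hde₁ hmind
  have hcomp : ∀ x : Mbar.obj c,
      Mbar.map (homOfLE hde₁) (Mbar.map (homOfLE h) x) = Mbar.map (homOfLE hce₁) x :=
    fun x => mapsq Mbar h hde₁ x
  have hbij : Function.Bijective (Mbar.map (homOfLE h)) := by
    constructor
    · intro x y hxy
      apply hbc.1
      rw [← hcomp x, ← hcomp y, hxy]
    · intro y
      obtain ⟨x, hx⟩ := hbc.2 (Mbar.map (homOfLE hde₁) y)
      refine ⟨x, hbd.1 ?_⟩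
      rw [hcomp, hx]
  exact (ConcreteCategory.isIso_iff_bijective _).mpr hbij
end

section
/- Over a field k, there exists a finitely generated kZ̄²-module that is not finitely presented. Concretely, let M : ℤ² → k-Vect be given by M(x,y) = k if x + y < 0 and M(x,y) = 0 otherwise, with identity maps k → k whenever both values are k. Then the extension M̄ to Z̄² (M̄(c) = lim_{d ≥ c, d ∈ ℤ²} M(d)) is generated by the single element at (−∞,−∞) — i.e. there is an epimorphism k[Mor_{Z̄²}((−∞,−∞),−)] → M̄ — but M̄ is not finitely presented as a kZ̄²-module. -/
open Finset CategoryTheory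

attribute [local instance 2000] Preorder.smallCategory

set_option linter.unusedSectionVars false
set_option synthInstance.maxHeartbeats 1000000
set_option maxHeartbeats 1000000

namespace Stmt15Aux

open CategoryTheory Limits

noncomputable section

variable {k : Type} [Field k]

/-! ### Generalities on finite coproducts in functor categories -/

section Coprod

variable {D : Type} [Preorder D] {m : ℕ}

instance : HasFiniteBiproducts (D ⥤ ModuleCat k) :=
  HasFiniteBiproducts.of_hasFiniteProducts

variable (F : Fin m → (D ⥤ ModuleCat k))

/-- Projection out of a finite coproduct of functors. -/
noncomputable def pr (i : Fin m) : (∐ F) ⟶ F i :=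
  (biproduct.isoCoproduct F).inv ≫ biproduct.π F i

lemma ι_isoCoproduct (i : Fin m) :
    Sigma.ι F i ≫ (biproduct.isoCoproduct F).inv = biproduct.ι F i := by
  simp [biproduct.isoCoproduct_inv]

lemma ι_pr (i j : Fin m) :
    Sigma.ι F i ≫ pr F j = if h : i = j then eqToHom (by rw [h]) else 0 := by
  rw [pr, ← Category.assoc, ι_isoCoproduct, biproduct.ι_π]

lemma ι_pr_self (i : Fin m) : Sigma.ι F i ≫ pr F i = 𝟙 (F i) := by
  rw [ι_pr]; simp

lemma ι_pr_ne {i j : Fin m} (h : i ≠ j) : Sigma.ι F i ≫ pr F j = 0 := by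
  rw [ι_pr]; simp [h]

lemma pr_total : ∑ i : Fin m, pr F i ≫ Sigma.ι F i = 𝟙 (∐ F) := by
  have hι : ∀ i : Fin m, Sigma.ι F i = biproduct.ι F i ≫ (biproduct.isoCoproduct F).hom := by
    intro i; simp [biproduct.isoCoproduct_hom]
  have heach : ∀ i : Fin m, pr F i ≫ Sigma.ι F i =
      (biproduct.isoCoproduct F).inv ≫ (biproduct.π F i ≫ biproduct.ι F i) ≫
        (biproduct.isoCoproduct F).hom := by
    intro i; rw [pr, hι i]; simp [Category.assoc]
  rw [Finset.sum_congr rfl (fun i _ => heach i), ← Preadditive.comp_sum, ← Preadditive.sum_comp,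
    biproduct.total]
  rw [Category.id_comp, Iso.inv_hom_id]

variable {F}

lemma decompose (cc : D) (y : (∐ F).obj cc) :
    y = ∑ i : Fin m, (Sigma.ι F i).app cc ((pr F i).app cc y) := by
  have h2 := congrArg (fun (α : (∐ F) ⟶ (∐ F)) => α.app cc y) (pr_total F)
  simp only [NatTrans.app_sum, NatTrans.comp_app, NatTrans.id_app] at h2
  change (∑ i, (pr F i).app cc ≫ (Sigma.ι F i).app cc).hom y = _ at h2
  rw [ModuleCat.hom_sum, LinearMap.coe_sum, Finset.sum_apply] at h2
  exact h2.symm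

lemma components_zero (cc : D) (wv : ∀ i, (F i).obj cc)
    (h : ∑ i : Fin m, (Sigma.ι F i).app cc (wv i) = 0) (i : Fin m) : wv i = 0 := by
  have h2 := congrArg ((pr F i).app cc) h
  rw [map_sum, map_zero] at h2
  rw [Finset.sum_eq_single i] at h2
  · have h3 := congrArg (fun (α : F i ⟶ F i) => α.app cc (wv i)) (ι_pr_self F i)
    simp only [NatTrans.comp_app, NatTrans.id_app] at h3
    have h4 : ((Sigma.ι F i).app cc ≫ (pr F i).app cc) (wv i) = 0 := h2
    rw [h3] at h4
    simpa using h4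
  · intro j _ hji
    have h3 := congrArg (fun (α : F j ⟶ F i) => α.app cc (wv j)) (ι_pr_ne F hji)
    simp only [NatTrans.comp_app, NatTrans.app_zero] at h3
    rw [show (pr F i).app cc ((Sigma.ι F j).app cc (wv j)) =
      ((Sigma.ι F j).app cc ≫ (pr F i).app cc) (wv j) from rfl, h3]
    rfl
  · intro hi; exact absurd (Finset.mem_univ i) hi

lemma ι_naturality (i : Fin m) {cc cc' : D} (φ : cc ⟶ cc') (z : (F i).obj cc) :
    (∐ F).map φ ((Sigma.ι F i).app cc z) = (Sigma.ι F i).app cc' ((F i).map φ z) := by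
  have h := congrArg (fun (ψ : (F i).obj cc ⟶ (∐ F).obj cc') => ψ z)
    ((Sigma.ι F i).naturality φ)
  exact h.symm

end Coprod

/-! ### Basic helpers -/

lemma isoInj {A B : ModuleCat k} (f : A ⟶ B) (hf : IsIso f) : Function.Injective f := by
  haveI := hf
  exact (ModuleCat.mono_iff_injective f).mp inferInstance

lemma map_map {C' : Type} [Preorder C'] (Fq : C' ⥤ ModuleCat k) {a b c : C'}
    (h1 : a ≤ b) (h2 : b ≤ c) (x : Fq.obj a) :
    Fq.map (homOfLE h2) (Fq.map (homOfLE h1) x) = Fq.map (homOfLE (h1.trans h2)) x := by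
  rw [← homOfLE_comp h1 h2, Fq.map_comp]
  rfl

lemma repMapInj {C' : Type} [Preorder C'] (s : C') {a b : C'} (hab : a ≤ b) :
    Function.Injective ((RepM k s).map (homOfLE hab)) := by
  have : Function.Injective (fun (h : s ⟶ a) => h ≫ homOfLE hab) :=
    fun x y _ => Subsingleton.elim x y
  exact Finsupp.mapDomain_injective this

lemma finsupp_single_of_subsingleton {X : Type} [Subsingleton X] (h0 : X) (z : X →₀ k) :
    z = z h0 • ModuleCat.freeMk (R := k) h0 := by
  have : (z h0 • ModuleCat.freeMk (R := k) h0 : X →₀ k) = Finsupp.single h0 (z h0) := by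
    change (z h0 • Finsupp.single h0 (1 : k) : X →₀ k) = _
    rw [Finsupp.smul_single, smul_eq_mul, mul_one]
  rw [this]
  ext a
  rw [Subsingleton.elim a h0, Finsupp.single_eq_same]

/-! ### Transported structure of `Mbar` -/

section Main

variable (M : (Fin 2 → ℤ) ⥤ ModuleCat k) (Mbar : (Fin 2 → WithBot ℤ) ⥤ ModuleCat k)

lemma barZero (hext : IsExtension M Mbar)
    (hobj : ∀ c : Fin 2 → ℤ,
      (c 0 + c 1 < 0 → Nonempty (M.obj c ≅ ModuleCat.of k k)) ∧
      (¬ c 0 + c 1 < 0 → ∀ x : M.obj c, x = 0))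
    (e : Fin 2 → ℤ) (he : ¬ e 0 + e 1 < 0) (x : Mbar.obj (embZ e)) : x = 0 := by
  have hE : Mbar.obj (embZ e) = M.obj e := Functor.congr_obj hext.1 e
  have L := (eqToIso hE).toLinearEquiv
  have := (hobj e).2 he (L x)
  calc x = L.symm (L x) := (L.symm_apply_apply x).symm
  _ = L.symm 0 := by rw [this]
  _ = 0 := map_zero _

lemma barIso (hext : IsExtension M Mbar)
    (hobj : ∀ c : Fin 2 → ℤ,
      (c 0 + c 1 < 0 → Nonempty (M.obj c ≅ ModuleCat.of k k)) ∧
      (¬ c 0 + c 1 < 0 → ∀ x : M.obj c, x = 0))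
    (e : Fin 2 → ℤ) (he : e 0 + e 1 < 0) :
    Nonempty (Mbar.obj (embZ e) ≃ₗ[k] k) := by
  have hE : Mbar.obj (embZ e) = M.obj e := Functor.congr_obj hext.1 e
  obtain ⟨φ⟩ := (hobj e).1 he
  exact ⟨((eqToIso hE).toLinearEquiv).trans φ.toLinearEquiv⟩

lemma barMapIso (hext : IsExtension M Mbar)
    (hmap : ∀ (c d : Fin 2 → ℤ) (h : c ≤ d),
      c 0 + c 1 < 0 → d 0 + d 1 < 0 → IsIso (M.map (homOfLE h)))
    (e e' : Fin 2 → ℤ) (h : embZ e ≤ embZ e')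
    (he : e 0 + e 1 < 0) (he' : e' 0 + e' 1 < 0) :
    IsIso (Mbar.map (homOfLE h)) := by
  have h2 : e ≤ e' := fun i => WithBot.coe_le_coe.mp (h i)
  have hc := Functor.congr_hom hext.1 (homOfLE h2)
  have he2 : (embZ_mono.functor ⋙ Mbar).map (homOfLE h2) = Mbar.map (homOfLE h) := by
    have h3 : embZ_mono.functor.map (homOfLE h2) = homOfLE h := Subsingleton.elim _ _
    rw [Functor.comp_map, h3]
    exact rfl
  rw [he2] at hc
  rw [hc]
  haveI := hmap e e' h2 he he'
  exact IsIso.comp_isIso' (Iso.isIso_hom (eqToIso (Functor.congr_obj hext.1 e)))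
    (IsIso.comp_isIso' this (Iso.isIso_hom (eqToIso (Functor.congr_obj hext.1 e').symm)))

/-! ### The generator of `Mbar` -/

lemma genx (hext : IsExtension M Mbar)
    (hobj : ∀ c : Fin 2 → ℤ,
      (c 0 + c 1 < 0 → Nonempty (M.obj c ≅ ModuleCat.of k k)) ∧
      (¬ c 0 + c 1 < 0 → ∀ x : M.obj c, x = 0))
    (hmap : ∀ (c d : Fin 2 → ℤ) (h : c ≤ d),
      c 0 + c 1 < 0 → d 0 + d 1 < 0 → IsIso (M.map (homOfLE h))) :
    ∃ x : Mbar.obj (fun _ => (⊥ : WithBot ℤ)),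
      (∀ (e : Fin 2 → ℤ), e 0 + e 1 < 0 →
        ∀ h : (fun _ => (⊥ : WithBot ℤ)) ≤ embZ e, Mbar.map (homOfLE h) x ≠ 0) ∧
      (∀ (cc : Fin 2 → WithBot ℤ) (h : (fun _ => (⊥ : WithBot ℤ)) ≤ cc) (y : Mbar.obj cc),
        ∃ a : k, y = a • Mbar.map (homOfLE h) x) := by
  classical
  set b : Fin 2 → ℤ := fun _ => -1 with hbdef
  have hb : b 0 + b 1 < 0 := by norm_num [hbdef]
  obtain ⟨φb⟩ := barIso M Mbar hext hobj b hb
  set ξ : Mbar.obj (embZ b) := φb.symm 1 with hxidef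
  have hξ0 : ξ ≠ 0 := by
    intro h0
    have : (1 : k) = 0 := by
      calc (1 : k) = φb ξ := (φb.apply_symm_apply 1).symm
      _ = φb 0 := by rw [h0]
      _ = 0 := map_zero _
    exact one_ne_zero this
  -- the meet with b
  set mb : (Fin 2 → ℤ) → (Fin 2 → ℤ) := fun e i => min (e i) (-1) with hmbdef
  have hmb_le_b : ∀ e, mb e ≤ b := fun e i => min_le_right _ _
  have hmb_le : ∀ e, mb e ≤ e := fun e i => min_le_left _ _
  have hmb_s : ∀ e, (mb e) 0 + (mb e) 1 < 0 := by
    intro e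
    have h1 : mb e 0 ≤ -1 := min_le_right _ _
    have h2 : mb e 1 ≤ -1 := min_le_right _ _
    omega
  have hmb_mono : ∀ {e e'}, e ≤ e' → mb e ≤ mb e' :=
    fun h i => min_le_min (h i) le_rfl
  -- preimages of ξ
  set ym : ∀ (mm : Fin 2 → ℤ), mm ≤ b → (mm 0 + mm 1 < 0) → Mbar.obj (embZ mm) :=
    fun mm hm hms =>
      haveI := barMapIso M Mbar hext hmap mm b (embZ_mono hm) hms hb
      inv (Mbar.map (homOfLE (embZ_mono hm))) ξ with hymdef
  have hym : ∀ (mm : Fin 2 → ℤ) (hm : mm ≤ b) (hms : mm 0 + mm 1 < 0),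
      Mbar.map (homOfLE (embZ_mono hm)) (ym mm hm hms) = ξ := by
    intro mm hm hms
    haveI := barMapIso M Mbar hext hmap mm b (embZ_mono hm) hms hb
    rw [hymdef]
    exact congrArg (fun ψ : Mbar.obj (embZ b) ⟶ Mbar.obj (embZ b) => ψ ξ)
      (IsIso.inv_hom_id (Mbar.map (homOfLE (embZ_mono hm))))
  have hym0 : ∀ (mm : Fin 2 → ℤ) (hm : mm ≤ b) (hms : mm 0 + mm 1 < 0),
      ym mm hm hms ≠ 0 := by
    intro mm hm hms h0
    apply hξ0
    rw [← hym mm hm hms, h0, map_zero]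
  have hykey : ∀ (mm mm' : Fin 2 → ℤ) (hm : mm ≤ b) (hm' : mm' ≤ b)
      (hms : mm 0 + mm 1 < 0) (hms' : mm' 0 + mm' 1 < 0) (h : mm ≤ mm'),
      Mbar.map (homOfLE (embZ_mono h)) (ym mm hm hms) = ym mm' hm' hms' := by
    intro mm mm' hm hm' hms hms' h
    apply isoInj (Mbar.map (homOfLE (embZ_mono hm')))
      (barMapIso M Mbar hext hmap mm' b (embZ_mono hm') hms' hb)
    rw [map_map, hym mm' hm' hms']
    exact hym mm hm hms
  -- the compatible family
  set famF : ∀ (e : Fin 2 → ℤ), (fun _ => (⊥ : WithBot ℤ)) ≤ embZ e → Mbar.obj (embZ e) :=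
    fun e _ => Mbar.map (homOfLE (embZ_mono (hmb_le e))) (ym (mb e) (hmb_le_b e) (hmb_s e))
    with hfamdef
  have hcompat : ∀ (e e' : Fin 2 → ℤ) (hd : (fun _ => (⊥ : WithBot ℤ)) ≤ embZ e)
      (he : (fun _ => (⊥ : WithBot ℤ)) ≤ embZ e') (hde : e ≤ e'),
      Mbar.map (homOfLE (embZ_mono hde)) (famF e hd) = famF e' he := by
    intro e e' hd he hde
    rw [hfamdef]
    simp only
    rw [map_map]
    have h1 : mb e ≤ mb e' := hmb_mono hde
    rw [← hykey (mb e) (mb e') (hmb_le_b e) (hmb_le_b e') (hmb_s e) (hmb_s e') h1, map_map]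
  obtain ⟨x, hx⟩ := (hext.2 (fun _ => (⊥ : WithBot ℤ))).2 famF hcompat
  have hfam_ne : ∀ (e : Fin 2 → ℤ) (hd : (fun _ => (⊥ : WithBot ℤ)) ≤ embZ e),
      e 0 + e 1 < 0 → famF e hd ≠ 0 := by
    intro e hd hes h0
    apply hym0 (mb e) (hmb_le_b e) (hmb_s e)
    apply isoInj (Mbar.map (homOfLE (embZ_mono (hmb_le e))))
      (barMapIso M Mbar hext hmap (mb e) e (embZ_mono (hmb_le e)) (hmb_s e) hes)
    rw [map_zero]
    exact h0
  refine ⟨x, ?_, ?_⟩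
  · intro e hes h h0
    exact hfam_ne e h hes (by rw [← hx e h]; exact h0)
  · intro cc h y
    by_cases hs : ∃ e : Fin 2 → ℤ, cc ≤ embZ e ∧ e 0 + e 1 < 0
    · obtain ⟨es, hces, hessupp⟩ := hs
      obtain ⟨φs⟩ := barIso M Mbar hext hobj es hessupp
      set ys := Mbar.map (homOfLE hces) y with hysdef
      set xs := Mbar.map (homOfLE (h.trans hces)) x with hxsdef
      have hxs : xs = famF es (h.trans hces) := hx es (h.trans hces)
      have hxs0 : xs ≠ 0 := by rw [hxs]; exact hfam_ne es (h.trans hces) hessupp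
      have hφxs0 : φs xs ≠ 0 := by
        intro h0
        exact hxs0 (by
          calc xs = φs.symm (φs xs) := (φs.symm_apply_apply xs).symm
          _ = φs.symm 0 := by rw [h0]
          _ = 0 := map_zero _)
      set a : k := φs ys / φs xs with hadef
      have hkey : ys = a • xs := by
        apply φs.injective
        rw [map_smul, hadef, smul_eq_mul, div_mul_cancel₀ _ hφxs0]
      refine ⟨a, (hext.2 cc).1 y (a • Mbar.map (homOfLE h) x) ?_⟩
      intro e hce
      rw [map_smul, map_map]
      by_cases hes2 : e 0 + e 1 < 0
      · set mm : Fin 2 → ℤ := fun i => min (e i) (es i) with hmmdef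
        have hmm_le : mm ≤ e := fun i => min_le_left _ _
        have hmm_le' : mm ≤ es := fun i => min_le_right _ _
        have hmm_s : mm 0 + mm 1 < 0 := by
          have h1 : mm 0 ≤ es 0 := min_le_right _ _
          have h2 : mm 1 ≤ es 1 := min_le_right _ _
          omega
        have hcm : cc ≤ embZ mm := by
          intro i
          have h1 := hce i
          have h2 := hces i
          have : embZ mm i = min (embZ e i) (embZ es i) := by
            simp only [embZ, hmmdef]
            exact WithBot.coe_min _ _
          rw [this]
          exact le_min h1 h2
        have key2 : Mbar.map (homOfLE hcm) y =
            a • Mbar.map (homOfLE (h.trans hcm)) x := by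
          apply isoInj (Mbar.map (homOfLE (embZ_mono hmm_le')))
            (barMapIso M Mbar hext hmap mm es (embZ_mono hmm_le') hmm_s hessupp)
          rw [map_smul, map_map, map_map]
          exact hkey
        calc Mbar.map (homOfLE hce) y
            = Mbar.map (homOfLE (embZ_mono hmm_le)) (Mbar.map (homOfLE hcm) y) := by
              rw [map_map]
          _ = Mbar.map (homOfLE (embZ_mono hmm_le))
              (a • Mbar.map (homOfLE (h.trans hcm)) x) := by rw [key2]
          _ = a • Mbar.map (homOfLE (h.trans hce)) x := by
              rw [map_smul, map_map]
      · rw [barZero M Mbar hext hobj e hes2 (Mbar.map (homOfLE hce) y),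
          barZero M Mbar hext hobj e hes2 (Mbar.map (homOfLE (h.trans hce)) x), smul_zero]
    · refine ⟨0, ?_⟩
      rw [zero_smul]
      apply (hext.2 cc).1 y 0
      intro e hce
      rw [map_zero]
      exact barZero M Mbar hext hobj e (fun hlt => hs ⟨e, hce, hlt⟩) _


/-- The natural transformation out of a representable determined by an element. -/
noncomputable def toM (s : Fin 2 → WithBot ℤ) (x : Mbar.obj s) : RepM k s ⟶ Mbar where
  app cc := ModuleCat.freeDesc (TypeCat.ofHom (fun (h : s ⟶ cc) => Mbar.map h x))
  naturality cc cc' φ := by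
    apply ModuleCat.free_hom_ext
    intro h0
    show (ModuleCat.freeDesc (TypeCat.ofHom (fun (h : s ⟶ cc') => Mbar.map h x)))
        (((RepM k s).map φ) (ModuleCat.freeMk h0)) =
      Mbar.map φ ((ModuleCat.freeDesc (TypeCat.ofHom (fun (h : s ⟶ cc) => Mbar.map h x)))
        (ModuleCat.freeMk h0))
    rw [show ((RepM k s).map φ) (ModuleCat.freeMk h0) = ModuleCat.freeMk (h0 ≫ φ) from
      ModuleCat.free_map_apply _ _]
    rw [ModuleCat.freeDesc_apply, ModuleCat.freeDesc_apply]
    show Mbar.map (h0 ≫ φ) x = Mbar.map φ (Mbar.map h0 x)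
    rw [Mbar.map_comp]
    rfl

lemma toM_epi (x : Mbar.obj (fun _ => (⊥ : WithBot ℤ)))
    (hspan : ∀ (cc : Fin 2 → WithBot ℤ) (h : (fun _ => (⊥ : WithBot ℤ)) ≤ cc)
      (y : Mbar.obj cc), ∃ a : k, y = a • Mbar.map (homOfLE h) x) :
    Epi (toM Mbar (fun _ => (⊥ : WithBot ℤ)) x) := by
  rw [NatTrans.epi_iff_epi_app]
  intro cc
  rw [ModuleCat.epi_iff_surjective]
  intro y
  obtain ⟨a, ha⟩ := hspan cc (fun i => bot_le) y
  refine ⟨a • ModuleCat.freeMk (homOfLE (fun i => bot_le)), ?_⟩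
  show (ModuleCat.freeDesc (TypeCat.ofHom (fun (h : (fun _ => (⊥ : WithBot ℤ)) ⟶ cc) => Mbar.map h x)))
      (a • ModuleCat.freeMk (homOfLE (fun i => bot_le))) = y
  rw [map_smul, ModuleCat.freeDesc_apply]
  exact ha.symm

end Main

end

end Stmt15Aux

theorem stmt15 (k : Type) [Field k]
    (M : (Fin 2 → ℤ) ⥤ ModuleCat k) (Mbar : (Fin 2 → WithBot ℤ) ⥤ ModuleCat k)
    (hext : IsExtension M Mbar)
    (hobj : ∀ c : Fin 2 → ℤ,
      (c 0 + c 1 < 0 → Nonempty (M.obj c ≅ ModuleCat.of k k)) ∧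
      (¬ c 0 + c 1 < 0 → ∀ x : M.obj c, x = 0))
    (hmap : ∀ (c d : Fin 2 → ℤ) (h : c ≤ d),
      c 0 + c 1 < 0 → d 0 + d 1 < 0 → IsIso (M.map (homOfLE h))) :
    (∃ f : RepM k (fun _ => (⊥ : WithBot ℤ)) ⟶ Mbar, Epi f) ∧ ¬ FinPres Mbar := by
  classical
  obtain ⟨x, hx0, hxspan⟩ := Stmt15Aux.genx M Mbar hext hobj hmap
  constructor
  · exact ⟨Stmt15Aux.toM Mbar (fun _ => (⊥ : WithBot ℤ)) x,
      Stmt15Aux.toM_epi Mbar x hxspan⟩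
  · intro hFP
    obtain ⟨p, q, s, t, f, g, w, hf, hl⟩ := hFP
    -- choose `N` larger than all the finite second coordinates of the `t j`
    have hn : ∀ j : Fin q, ∃ nj : ℤ, t j 1 = ⊥ ∨ ((nj : WithBot ℤ) < t j 1) := by
      intro j
      cases hjj : t j 1 with
      | bot => exact ⟨0, Or.inl rfl⟩
      | coe mj =>
        exact ⟨mj - 1, Or.inr (WithBot.coe_lt_coe.mpr (by omega))⟩
    choose nf hnf using hn
    set N : ℤ := ∑ j : Fin q, max (-(nf j)) 0 with hNdef
    have hNge : ∀ j : Fin q, -(nf j) ≤ N := by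
      intro j
      calc -(nf j) ≤ max (-(nf j)) 0 := le_max_left _ _
      _ ≤ N := Finset.single_le_sum (f := fun j => max (-(nf j)) 0)
          (fun _ _ => le_max_right _ _) (Finset.mem_univ j)
    set dd : Fin 2 → WithBot ℤ := ![((N : ℤ) : WithBot ℤ), ⊥] with hdddef
    set ce : Fin 2 → ℤ := ![N, -N] with hcedef
    have hdc : dd ≤ embZ ce := by
      intro i
      fin_cases i <;> simp [hdddef, hcedef, embZ]
    have hceN1 : embZ ce 1 = ((-N : ℤ) : WithBot ℤ) := by simp [hcedef, embZ]
    have hceN0 : embZ ce 0 = ((N : ℤ) : WithBot ℤ) := by simp [hcedef, embZ]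
    have htled : ∀ j : Fin q, t j ≤ embZ ce → t j ≤ dd := by
      intro j hle i
      have h1 := hle 1
      rw [hceN1] at h1
      have hbot : t j 1 = ⊥ := by
        rcases hnf j with hh | hh
        · exact hh
        · exfalso
          have h2 : ((nf j : ℤ) : WithBot ℤ) < ((-N : ℤ) : WithBot ℤ) := lt_of_lt_of_le hh h1
          rw [WithBot.coe_lt_coe] at h2
          have := hNge j
          omega
      fin_cases i
      · have h0 := hle 0
        rw [hceN0] at h0
        simpa [hdddef] using h0
      · simp [hdddef, hbot]
    -- a nonzero element of `Mbar.obj dd`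
    have hbotdd : (fun _ => (⊥ : WithBot ℤ)) ≤ dd := fun i => bot_le
    set bp : Fin 2 → ℤ := ![N, -N-1] with hbpdef
    have hbps : bp 0 + bp 1 < 0 := by simp [hbpdef]; omega
    have hddbp : dd ≤ embZ bp := by
      intro i
      fin_cases i <;> simp [hdddef, hbpdef, embZ]
    have hxd : Mbar.map (homOfLE hbotdd) x ≠ 0 := by
      intro h0
      exact hx0 bp hbps (hbotdd.trans hddbp)
        (by rw [← Stmt15Aux.map_map Mbar hbotdd hddbp, h0, map_zero])
    -- pull it back through the epimorphism `f`
    have hfd : Function.Surjective (f.app dd) := by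
      have := (NatTrans.epi_iff_epi_app f).mp hf dd
      exact (ModuleCat.epi_iff_surjective _).mp this
    obtain ⟨v, hv⟩ := hfd (Mbar.map (homOfLE hbotdd) x)
    set vc := (∐ fun i => RepM k (s i)).map (homOfLE hdc) v with hvcdef
    have hMbarce : ∀ z : Mbar.obj (embZ ce), z = 0 :=
      Stmt15Aux.barZero M Mbar hext hobj ce
        (by simp only [hcedef, Matrix.cons_val_zero, Matrix.cons_val_one, Matrix.head_cons]; omega)
    -- lift `vc` to the kernel of `f` and then through the epi `kernel.lift f g w`
    set Ez := (evaluation (Fin 2 → WithBot ℤ) (ModuleCat k)).obj (embZ ce) with hEzdef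
    have hfvc : (Ez.map f) vc = 0 := hMbarce _
    haveI : IsIso (Limits.kernelComparison f Ez) := by
      rw [← Limits.PreservesKernel.iso_hom]
      infer_instance
    set zk : (Limits.kernel (Ez.map f) : ModuleCat k) :=
      (ModuleCat.kernelIsoKer (Ez.map f)).inv ⟨vc, hfvc⟩ with hzkdef
    have hzk : Limits.kernel.ι (Ez.map f) zk = vc :=
      congrArg (fun (ψ : ModuleCat.of k (LinearMap.ker (Ez.map f).hom) ⟶ _) =>
        ψ (⟨vc, hfvc⟩ : LinearMap.ker (Ez.map f).hom))
        (ModuleCat.kernelIsoKer_inv_kernel_ι (Ez.map f))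
    set κ := inv (Limits.kernelComparison f Ez) zk with hκdef
    have h7 : Limits.kernelComparison f Ez κ = zk :=
      congrArg (fun (ψ : Limits.kernel (Ez.map f) ⟶ Limits.kernel (Ez.map f)) => ψ zk)
        (IsIso.inv_hom_id (Limits.kernelComparison f Ez))
    have hκι : (Limits.kernel.ι f).app (embZ ce) κ = vc := by
      have h6 := congrArg (fun (ψ : Ez.obj (Limits.kernel f) ⟶ Ez.obj (∐ fun i => RepM k (s i))) => ψ κ)
        (Limits.kernelComparison_comp_ι f Ez)
      calc (Limits.kernel.ι f).app (embZ ce) κ = Ez.map (Limits.kernel.ι f) κ := rfl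
        _ = Limits.kernel.ι (Ez.map f) (Limits.kernelComparison f Ez κ) := h6.symm
        _ = Limits.kernel.ι (Ez.map f) zk := by rw [h7]
        _ = vc := hzk
    have hℓ : Function.Surjective ((Limits.kernel.lift f g w).app (embZ ce)) := by
      have := (NatTrans.epi_iff_epi_app _).mp hl (embZ ce)
      exact (ModuleCat.epi_iff_surjective _).mp this
    obtain ⟨u, hu⟩ := hℓ κ
    have hgu : g.app (embZ ce) u = vc := by
      have h8 := congrArg (fun (α : (∐ fun j => RepM k (t j)) ⟶ (∐ fun i => RepM k (s i))) => α.app (embZ ce) u) (Limits.kernel.lift_ι f g w)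
      calc g.app (embZ ce) u
          = (Limits.kernel.ι f).app (embZ ce) ((Limits.kernel.lift f g w).app (embZ ce) u) :=
            h8.symm
        _ = (Limits.kernel.ι f).app (embZ ce) κ := by rw [hu]
        _ = vc := hκι
    -- decompose `u` into its components and lift them to `dd`
    set zz := fun j => (Stmt15Aux.pr (fun j => RepM k (t j)) j).app (embZ ce) u with hzzdef
    have hdecomp : u = ∑ j, (Limits.Sigma.ι (fun j => RepM k (t j)) j).app (embZ ce) (zz j) :=
      Stmt15Aux.decompose _ u
    have hlift : ∀ j : Fin q, ∃ z' : (RepM k (t j)).obj dd,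
        (RepM k (t j)).map (homOfLE hdc) z' = zz j := by
      intro j
      by_cases hj : Nonempty (t j ⟶ embZ ce)
      · obtain ⟨h0⟩ := hj
        have htj : t j ≤ dd := htled j (leOfHom h0)
        refine ⟨(show (t j ⟶ embZ ce) →₀ k from zz j) h0 • ModuleCat.freeMk (homOfLE htj), ?_⟩
        refine (LinearMap.map_smul _ _ _).trans ?_
        rw [show ((RepM k (t j)).map (homOfLE hdc)) (ModuleCat.freeMk (homOfLE htj))
            = ModuleCat.freeMk (homOfLE htj ≫ homOfLE hdc) from ModuleCat.free_map_apply _ _]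
        rw [Subsingleton.elim (homOfLE htj ≫ homOfLE hdc) h0]
        exact (Stmt15Aux.finsupp_single_of_subsingleton h0
          (show (t j ⟶ embZ ce) →₀ k from zz j)).symm
      · refine ⟨0, ?_⟩
        rw [map_zero]
        haveI : IsEmpty (t j ⟶ embZ ce) := not_nonempty_iff.mp hj
        haveI : Subsingleton ((t j ⟶ embZ ce) →₀ k) :=
          ⟨fun a b => Finsupp.ext (fun h => isEmptyElim h)⟩
        exact Subsingleton.elim (0 : (t j ⟶ embZ ce) →₀ k)
          (show (t j ⟶ embZ ce) →₀ k from zz j)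
    choose z' hz' using hlift
    set u' := ∑ j, (Limits.Sigma.ι (fun j => RepM k (t j)) j).app dd (z' j) with hu'def
    have hu'map : (∐ fun j => RepM k (t j)).map (homOfLE hdc) u' = u := by
      rw [hu'def, map_sum]
      have hterm : ∀ j ∈ Finset.univ, (∐ fun j => RepM k (t j)).map (homOfLE hdc)
          ((Limits.Sigma.ι (fun j => RepM k (t j)) j).app dd (z' j)) =
          (Limits.Sigma.ι (fun j => RepM k (t j)) j).app (embZ ce) (zz j) := by
        intro j _
        rw [Stmt15Aux.ι_naturality, hz']
      rw [Finset.sum_congr rfl hterm]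
      exact hdecomp.symm
    set v' := g.app dd u' with hv'def
    have hv'c : (∐ fun i => RepM k (s i)).map (homOfLE hdc) v' = vc := by
      have h10 : g.app (embZ ce) ((∐ fun j => RepM k (t j)).map (homOfLE hdc) u') = (∐ fun i => RepM k (s i)).map (homOfLE hdc) v' :=
        congrArg (fun (ψ : (∐ fun j => RepM k (t j)).obj dd ⟶ (∐ fun i => RepM k (s i)).obj (embZ ce)) => ψ u') (g.naturality (homOfLE hdc))
      rw [← h10, hu'map, hgu]
    have hvc' : (∐ fun i => RepM k (s i)).map (homOfLE hdc) (v - v') = 0 := by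
      rw [map_sub, hv'c, ← hvcdef, sub_self]
    set wv := fun i => (Stmt15Aux.pr (fun i => RepM k (s i)) i).app dd (v - v') with hwvdef
    have hdecv : v - v' = ∑ i, (Limits.Sigma.ι (fun i => RepM k (s i)) i).app dd (wv i) :=
      Stmt15Aux.decompose _ _
    have hwz : ∀ i, wv i = 0 := by
      have h11 : ∑ i, (Limits.Sigma.ι (fun i => RepM k (s i)) i).app (embZ ce)
          ((RepM k (s i)).map (homOfLE hdc) (wv i)) = 0 := by
        calc ∑ i, (Limits.Sigma.ι (fun i => RepM k (s i)) i).app (embZ ce)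
              ((RepM k (s i)).map (homOfLE hdc) (wv i))
            = (∐ fun i => RepM k (s i)).map (homOfLE hdc) (∑ i, (Limits.Sigma.ι (fun i => RepM k (s i)) i).app dd (wv i)) := by
              rw [map_sum]
              exact Finset.sum_congr rfl (fun i _ => (Stmt15Aux.ι_naturality _ _ _).symm)
          _ = (∐ fun i => RepM k (s i)).map (homOfLE hdc) (v - v') := by rw [← hdecv]
          _ = 0 := hvc'
      intro i
      have h12 := Stmt15Aux.components_zero (embZ ce) _ h11 i
      apply Stmt15Aux.repMapInj (s i) hdc
      rw [h12, map_zero]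
    have hvv' : v = v' := by
      have hsub : v - v' = 0 := by
        rw [hdecv]
        apply Finset.sum_eq_zero
        intro i _
        rw [hwz i, map_zero]
      exact sub_eq_zero.mp hsub
    have hfv' : f.app dd v' = 0 := by
      have h13 := congrArg (fun (α : (∐ fun j => RepM k (t j)) ⟶ Mbar) => α.app dd u') w
      calc f.app dd v' = (g ≫ f).app dd u' := rfl
        _ = (0 : (∐ fun j => RepM k (t j)) ⟶ Mbar).app dd u' := h13
        _ = 0 := by rw [NatTrans.app_zero]; rfl
    exact hxd (by rw [← hv, hvv', hfv'])
end

section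
/- Let M be a pointwise finitely presented Rℤⁿ-module (each M(c) is a finitely presented R-module). If M is finitely determined — i.e. encoded by the convex projection π : ℤⁿ → [a,b] for some a ≤ b in ℤⁿ — then the extension M̄ to Z̄ⁿ is pointwise finitely presented: for every c ∈ Z̄ⁿ, M̄(c) ≅ M((β ∘ α)(c)), where β ∘ α is the extension of π to Z̄ⁿ given coordinatewise by (β∘α)(c)ᵢ = aᵢ if cᵢ < aᵢ or cᵢ = −∞, cᵢ if aᵢ ≤ cᵢ ≤ bᵢ, and bᵢ if cᵢ > bᵢ. -/
open Finset CategoryTheory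

attribute [local instance 2000] Preorder.smallCategory

set_option linter.unusedSectionVars false
set_option synthInstance.maxHeartbeats 1000000
set_option maxHeartbeats 1000000

section St18Aux

variable {n : ℕ} {R : Type} [CommRing R] {a b : Fin n → ℤ}
  {M : (Fin n → ℤ) ⥤ ModuleCat R} {Mbar : (Fin n → WithBot ℤ) ⥤ ModuleCat R}

lemma st18_le_embZ_bfloor (a : Fin n → ℤ) (c : Fin n → WithBot ℤ) :
    c ≤ embZ (bfloor a c) := by
  intro i
  show c i ≤ ((WithBot.unbotD (a i) (c i) : ℤ) : WithBot ℤ)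
  rcases hc : c i with _ | m
  · exact bot_le
  · exact le_rfl

lemma st18_hle (hab : a ≤ b) (c : Fin n → WithBot ℤ) (d : Fin n → ℤ) (hd : c ≤ embZ d) :
    proj a b (bfloor a c) ≤ proj a b d := by
  intro i
  have hi := hd i
  rcases hc : c i with _ | m
  · have hb : bfloor a c i = a i := by show WithBot.unbotD (a i) (c i) = a i; rw [hc]; rfl
    show max (a i) (min (bfloor a c i) (b i)) ≤ max (a i) (min (d i) (b i))
    rw [hb, min_eq_left (hab i), max_self]
    exact le_max_left _ _
  · have hm : m ≤ d i := by
      rw [hc] at hi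
      exact WithBot.coe_le_coe.mp hi
    have hb : bfloor a c i = m := by show WithBot.unbotD (a i) (c i) = m; rw [hc]; rfl
    show max (a i) (min (bfloor a c i) (b i)) ≤ max (a i) (min (d i) (b i))
    rw [hb]
    exact max_le_max le_rfl (min_le_min hm le_rfl)

lemma st18_hsup (hab : a ≤ b) (c : Fin n → WithBot ℤ) (d : Fin n → ℤ) (hd : c ≤ embZ d) :
    proj a b (d ⊔ bfloor a c) = proj a b d := by
  funext i
  have hi := hd i
  show max (a i) (min ((d ⊔ bfloor a c) i) (b i)) = max (a i) (min (d i) (b i))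
  have hsup : (d ⊔ bfloor a c) i = max (d i) (bfloor a c i) := rfl
  rcases hc : c i with _ | m
  · have hb : bfloor a c i = a i := by show WithBot.unbotD (a i) (c i) = a i; rw [hc]; rfl
    rw [hsup, hb]
    rcases le_total (d i) (a i) with h | h
    · rw [max_eq_right h, min_eq_left (hab i),
        max_eq_left (min_le_of_left_le h), max_self]
    · rw [max_eq_left h]
  · have hm : m ≤ d i := by
      rw [hc] at hi
      exact WithBot.coe_le_coe.mp hi
    have hb : bfloor a c i = m := by show WithBot.unbotD (a i) (c i) = m; rw [hc]; rfl
    rw [hsup, hb, max_eq_left hm]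

lemma st18_obj (heq : embZ_mono.functor ⋙ Mbar = M) (d : Fin n → ℤ) :
    Mbar.obj (embZ d) = M.obj d := Functor.congr_obj heq d

lemma st18_map (heq : embZ_mono.functor ⋙ Mbar = M) {d e : Fin n → ℤ} (h : d ≤ e) :
    Mbar.map (homOfLE (embZ_mono h)) =
      eqToHom (st18_obj heq d) ≫ M.map (homOfLE h) ≫ eqToHom (st18_obj heq e).symm := by
  rw [show (homOfLE (embZ_mono h) : embZ d ⟶ embZ e) = embZ_mono.functor.map (homOfLE h) from
    Subsingleton.elim _ _]
  exact Functor.congr_hom heq (homOfLE h)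

lemma st18_nat (η : (proj_mono a b).functor ⋙ M ≅ M) {d e : Fin n → ℤ} (h : d ≤ e) :
    M.map (homOfLE (proj_mono a b h)) ≫ η.hom.app e = η.hom.app d ≫ M.map (homOfLE h) := by
  rw [show (homOfLE (proj_mono a b h) : proj a b d ⟶ proj a b e) =
      (proj_mono a b).functor.map (homOfLE h) from Subsingleton.elim _ _]
  exact η.hom.naturality (homOfLE h)

noncomputable def st18_gb (heq : embZ_mono.functor ⋙ Mbar = M)
    (η : (proj_mono a b).functor ⋙ M ≅ M) {p : Fin n → ℤ} {d : Fin n → ℤ}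
    (h : p ≤ proj a b d) : M.obj p ⟶ Mbar.obj (embZ d) :=
  M.map (homOfLE h) ≫ η.hom.app d ≫ eqToHom (st18_obj heq d).symm

lemma st18_gb_comp (heq : embZ_mono.functor ⋙ Mbar = M)
    (η : (proj_mono a b).functor ⋙ M ≅ M) {p d e : Fin n → ℤ}
    (h : p ≤ proj a b d) (hde : d ≤ e) :
    st18_gb heq η h ≫ Mbar.map (homOfLE (embZ_mono hde)) =
      st18_gb heq η (h.trans (proj_mono a b hde)) := by
  rw [st18_map heq hde]
  simp only [st18_gb, Category.assoc, eqToHom_trans_assoc, eqToHom_refl, Category.id_comp]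
  erw [Category.assoc, eqToHom_trans_assoc, eqToHom_refl, Category.id_comp]
  erw [← reassoc_of% st18_nat η hde, Category.assoc, ← Functor.map_comp_assoc]
  rfl

lemma st18_isIso (heq : embZ_mono.functor ⋙ Mbar = M)
    (η : (proj_mono a b).functor ⋙ M ≅ M) {d e : Fin n → ℤ} (hde : d ≤ e)
    (hp : proj a b d = proj a b e) :
    IsIso (Mbar.map (homOfLE (embZ_mono hde))) := by
  rw [st18_map heq hde]
  have h1 : M.map (homOfLE hde) =
      η.inv.app d ≫ M.map (homOfLE (proj_mono a b hde)) ≫ η.hom.app e := by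
    erw [st18_nat η hde, Iso.inv_hom_id_app_assoc]
  have h2 : (homOfLE (proj_mono a b hde) : proj a b d ⟶ proj a b e) = eqToHom hp :=
    Subsingleton.elim _ _
  rw [h1]
  erw [h2, eqToHom_map]
  exact IsIso.comp_isIso' inferInstance (IsIso.comp_isIso'
    (IsIso.comp_isIso' (η.app d).isIso_inv (IsIso.comp_isIso' inferInstance (η.app e).isIso_hom))
    inferInstance)

noncomputable def st18_u (heq : embZ_mono.functor ⋙ Mbar = M)
    (η : (proj_mono a b).functor ⋙ M ≅ M) (c : Fin n → WithBot ℤ) :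
    Mbar.obj c ⟶ M.obj (proj a b (bfloor a c)) :=
  Mbar.map (homOfLE (st18_le_embZ_bfloor a c)) ≫ eqToHom (st18_obj heq (bfloor a c)) ≫
    η.inv.app (bfloor a c)

lemma st18_u_gb_bfloor (heq : embZ_mono.functor ⋙ Mbar = M)
    (η : (proj_mono a b).functor ⋙ M ≅ M) (c : Fin n → WithBot ℤ) :
    st18_u heq η c ≫ st18_gb heq η (le_refl (proj a b (bfloor a c))) =
      Mbar.map (homOfLE (st18_le_embZ_bfloor a c)) := by
  have hid : (homOfLE (le_refl (proj a b (bfloor a c))) :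
      proj a b (bfloor a c) ⟶ proj a b (bfloor a c)) = 𝟙 _ := rfl
  simp only [st18_u, st18_gb, hid, M.map_id, Category.id_comp, Category.assoc,
    Iso.inv_hom_id_app_assoc, eqToHom_trans, eqToHom_refl, Category.comp_id]
  erw [Category.assoc, Iso.inv_hom_id_app_assoc, eqToHom_trans, eqToHom_refl, Category.comp_id]

lemma st18_u_gb (hab : a ≤ b) (heq : embZ_mono.functor ⋙ Mbar = M)
    (η : (proj_mono a b).functor ⋙ M ≅ M) (c : Fin n → WithBot ℤ)
    (d : Fin n → ℤ) (hd : c ≤ embZ d) :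
    st18_u heq η c ≫ st18_gb heq η (st18_hle hab c d hd) = Mbar.map (homOfLE hd) := by
  set e := d ⊔ bfloor a c with he_def
  have hde : d ≤ e := le_sup_left
  have h1e : bfloor a c ≤ e := le_sup_right
  have hp : proj a b d = proj a b e := (st18_hsup hab c d hd).symm
  haveI := st18_isIso heq η hde hp
  rw [← cancel_mono (Mbar.map (homOfLE (embZ_mono hde)))]
  rw [Category.assoc, st18_gb_comp heq η _ hde]
  have he : c ≤ embZ e := hd.trans (embZ_mono hde)
  have rhs : Mbar.map (homOfLE hd) ≫ Mbar.map (homOfLE (embZ_mono hde)) =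
      Mbar.map (homOfLE he) := by
    rw [← Mbar.map_comp]
    congr 1
  rw [rhs]
  -- now: u ≫ gb (at e) = Mbar.map (c ≤ e), where bfloor a c ≤ e
  have key : st18_gb heq η ((st18_hle hab c d hd).trans (proj_mono a b hde)) =
      st18_gb heq η (le_refl (proj a b (bfloor a c))) ≫
        Mbar.map (homOfLE (embZ_mono h1e)) := by
    rw [st18_gb_comp heq η _ h1e]
  rw [key, ← Category.assoc, st18_u_gb_bfloor heq η c, ← Mbar.map_comp]
  congr 1

end St18Aux

theorem stmt18 (n : ℕ) (R : Type) [CommRing R] (a b : Fin n → ℤ) (hab : a ≤ b)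
    (M : (Fin n → ℤ) ⥤ ModuleCat R) (Mbar : (Fin n → WithBot ℤ) ⥤ ModuleCat R)
    (hext : IsExtension M Mbar)
    (hfp : ∀ c : Fin n → ℤ, Module.FinitePresentation R (M.obj c))
    (henc : Nonempty ((proj_mono a b).functor ⋙ M ≅ M)) :
    ∀ c : Fin n → WithBot ℤ,
      Nonempty (Mbar.obj c ≅ M.obj (proj a b (bfloor a c))) ∧
      Module.FinitePresentation R (Mbar.obj c) := by
  unfold IsExtension at hext
  obtain ⟨heq, hlim⟩ := hext
  obtain ⟨η⟩ := henc
  intro c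
  have hinj : Function.Injective (st18_u heq η c) := by
    intro x y hxy
    refine (hlim c).1 x y fun d hd => ?_
    have h1 := (ConcreteCategory.congr_hom (st18_u_gb hab heq η c d hd)) x
    have h2 := (ConcreteCategory.congr_hom (st18_u_gb hab heq η c d hd)) y
    rw [← h1, ← h2]
    show st18_gb heq η _ (st18_u heq η c x) = st18_gb heq η _ (st18_u heq η c y)
    rw [hxy]
  have hsurj : Function.Surjective (st18_u heq η c) := by
    intro y
    obtain ⟨x, hx⟩ := (hlim c).2 (fun d hd => st18_gb heq η (st18_hle hab c d hd) y)
      (by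
        intro d e hd he hde
        have := (ConcreteCategory.congr_hom (st18_gb_comp heq η (st18_hle hab c d hd) hde)) y
        exact this)
    refine ⟨x, ?_⟩
    have hid : st18_gb heq η (le_refl (proj a b (bfloor a c))) ≫
        (eqToHom (st18_obj heq (bfloor a c)) ≫ η.inv.app (bfloor a c)) = 𝟙 _ := by
      have hid2 : (homOfLE (le_refl (proj a b (bfloor a c))) :
          proj a b (bfloor a c) ⟶ proj a b (bfloor a c)) = 𝟙 _ := rfl
      simp only [st18_gb, hid2, M.map_id, Category.id_comp, Category.assoc,
        eqToHom_trans_assoc, eqToHom_refl, Category.id_comp, Iso.hom_inv_id_app]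
      erw [Category.assoc, eqToHom_trans_assoc, eqToHom_refl, Category.id_comp, Iso.hom_inv_id_app]
      rfl
    have hx1 := hx (bfloor a c) (st18_le_embZ_bfloor a c)
    have hrfl : st18_u heq η c x =
        (eqToHom (st18_obj heq (bfloor a c)) ≫ η.inv.app (bfloor a c))
          ((Mbar.map (homOfLE (st18_le_embZ_bfloor a c))) x) := rfl
    rw [hrfl, hx1]
    exact ConcreteCategory.congr_hom hid y
  have hbij : Function.Bijective (st18_u heq η c) := ⟨hinj, hsurj⟩
  constructor
  · exact ⟨(LinearEquiv.ofBijective (st18_u heq η c).hom hbij).toModuleIso⟩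
  · have := hfp (proj a b (bfloor a c))
    refine Module.finitePresentation_of_surjective
      ((LinearEquiv.ofBijective (st18_u heq η c).hom hbij).symm.toLinearMap)
      (LinearEquiv.ofBijective (st18_u heq η c).hom hbij).symm.surjective ?_
    have hker : LinearMap.ker
        ((LinearEquiv.ofBijective (st18_u heq η c).hom hbij).symm.toLinearMap) = ⊥ :=
      LinearEquiv.ker _
    rw [hker]
    exact Submodule.fg_bot
end

section
/- Let M be a pointwise finitely presented Rℤⁿ-module. Then M is finitely determined (encoded by a convex projection π : ℤⁿ → [a,b] for some a ≤ b in ℤⁿ) if and only if its extension M̄ to Z̄ⁿ is S-determined for some finite subset S ⊆ Z̄ⁿ. -/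
open Finset CategoryTheory

attribute [local instance 2000] Preorder.smallCategory

set_option linter.unusedSectionVars false
set_option synthInstance.maxHeartbeats 1000000
set_option maxHeartbeats 1000000

section StAux

lemma stMapMap {C : Type} [Preorder C] {R : Type} [CommRing R] (F : C ⥤ ModuleCat R)
    {u v w : C} (h1 : u ≤ v) (h2 : v ≤ w) (x : F.obj u) :
    F.map (homOfLE h2) (F.map (homOfLE h1) x) = F.map (homOfLE (h1.trans h2)) x := by
  rw [← homOfLE_comp h1 h2, F.map_comp]; rfl

lemma stMapComp {C : Type} [Preorder C] {R : Type} [CommRing R] (F : C ⥤ ModuleCat R)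
    {u v v' w : C} (h1 : u ≤ v) (h2 : v ≤ w) (h1' : u ≤ v') (h2' : v' ≤ w) :
    F.map (homOfLE h1) ≫ F.map (homOfLE h2) = F.map (homOfLE h1') ≫ F.map (homOfLE h2') := by
  rw [← F.map_comp, ← F.map_comp]
  congr 1

lemma stMapIso {C : Type} [Preorder C] {R : Type} [CommRing R] (F : C ⥤ ModuleCat R)
    {u v : C} (h : u ≤ v) (he : u = v) : IsIso (F.map (homOfLE h)) := by
  have : homOfLE h = eqToHom he := Subsingleton.elim _ _
  rw [this]
  infer_instance

variable {n : ℕ}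

/-- Truncation of a point of `Z̄ⁿ` into `barIcc a b`. -/
noncomputable def stTrunc (a b : Fin n → ℤ) (c : Fin n → WithBot ℤ) : Fin n → WithBot ℤ :=
  fun i => if c i < (a i : WithBot ℤ) then ⊥ else min (c i) ((b i : WithBot ℤ))

/-- `barIcc a b` as a finset. -/
noncomputable def stS (a b : Fin n → ℤ) : Finset (Fin n → WithBot ℤ) :=
  Fintype.piFinset fun i => insert ⊥ ((Finset.Icc (a i) (b i)).image ((↑) : ℤ → WithBot ℤ))

lemma stTrunc_mem {a b : Fin n → ℤ} (hab : a ≤ b) (c : Fin n → WithBot ℤ) :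
    stTrunc a b c ∈ stS a b := by
  unfold stS
  rw [Fintype.mem_piFinset]
  intro i
  unfold stTrunc
  split_ifs with h
  · exact Finset.mem_insert_self _ _
  · push_neg at h
    have hne : c i ≠ ⊥ := by
      intro hb
      rw [hb] at h
      simp at h
    obtain ⟨k, hk⟩ := WithBot.ne_bot_iff_exists.mp hne
    have hak : a i ≤ k := by exact_mod_cast hk ▸ h
    rw [← hk, ← WithBot.coe_min]
    apply Finset.mem_insert_of_mem
    apply Finset.mem_image_of_mem
    rw [Finset.mem_Icc]
    exact ⟨le_min hak (hab i), min_le_right _ _⟩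

lemma stTrunc_le (a b : Fin n → ℤ) (c : Fin n → WithBot ℤ) : stTrunc a b c ≤ c := by
  intro i
  unfold stTrunc
  split_ifs with h
  · exact bot_le
  · exact min_le_left _ _

lemma le_stTrunc {a b : Fin n → ℤ} {s c : Fin n → WithBot ℤ} (hs : s ∈ stS a b)
    (hsc : s ≤ c) : s ≤ stTrunc a b c := by
  intro i
  have hi := Fintype.mem_piFinset.mp hs i
  rcases Finset.mem_insert.mp hi with h0 | himg
  · rw [h0]; exact bot_le
  · obtain ⟨m, hmI, hms⟩ := Finset.mem_image.mp himg
    rw [Finset.mem_Icc] at hmI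
    have hmc : (m : WithBot ℤ) ≤ c i := hms ▸ hsc i
    unfold stTrunc
    rw [if_neg (not_lt.mpr (le_trans (WithBot.coe_le_coe.mpr hmI.1) hmc))]
    rw [← hms]
    exact le_min hmc (WithBot.coe_le_coe.mpr hmI.2)

lemma stTrunc_eq {a b : Fin n → ℤ} (hab : a ≤ b) {c d : Fin n → WithBot ℤ}
    (hset : (↑(stS a b) : Set (Fin n → WithBot ℤ)) ∩ {x | x ≤ c} =
      ↑(stS a b) ∩ {x | x ≤ d}) : stTrunc a b c = stTrunc a b d := by
  apply le_antisymm
  · have h1 : stTrunc a b c ∈ (↑(stS a b) : Set (Fin n → WithBot ℤ)) ∩ {x | x ≤ c} :=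
      ⟨Finset.mem_coe.mpr (stTrunc_mem hab c), stTrunc_le a b c⟩
    rw [hset] at h1
    exact le_stTrunc (Finset.mem_coe.mp h1.1) h1.2
  · have h1 : stTrunc a b d ∈ (↑(stS a b) : Set (Fin n → WithBot ℤ)) ∩ {x | x ≤ d} :=
      ⟨Finset.mem_coe.mpr (stTrunc_mem hab d), stTrunc_le a b d⟩
    rw [← hset] at h1
    exact le_stTrunc (Finset.mem_coe.mp h1.1) h1.2

/-- Coordinatewise key fact for the forward direction. -/
lemma stCoord {a b : ℤ} (hab : a ≤ b) {ci di : WithBot ℤ} {ei : ℤ}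
    (ht : (if ci < (a : WithBot ℤ) then (⊥ : WithBot ℤ) else min ci (b : WithBot ℤ)) =
          (if di < (a : WithBot ℤ) then (⊥ : WithBot ℤ) else min di (b : WithBot ℤ)))
    (he : ci ≤ (ei : WithBot ℤ)) :
    max a (min (max (di.unbotD ei) ei) b) = max a (min ei b) := by
  induction di using WithBot.recBotCoe with
  | bot => simp
  | coe m =>
    rw [WithBot.unbotD_coe]
    by_cases hma : m < a
    · omega
    · have hma' : ¬ ((m : WithBot ℤ) < (a : WithBot ℤ)) := by simpa using hma
      rw [if_neg hma', ← WithBot.coe_min] at ht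
      by_cases hci : ci < (a : WithBot ℤ)
      · rw [if_pos hci] at ht
        exact absurd ht.symm (by simp)
      · rw [if_neg hci] at ht
        push_neg at hci
        have hne : ci ≠ ⊥ := by
          intro hb
          rw [hb] at hci
          simp at hci
        obtain ⟨k, hk⟩ := WithBot.ne_bot_iff_exists.mp hne
        rw [← hk, ← WithBot.coe_min, WithBot.coe_inj] at ht
        have hke : k ≤ ei := by
          rw [← hk] at he
          exact_mod_cast he
        omega

end StAux

theorem stmt19 (n : ℕ) (R : Type) [CommRing R]
    (M : (Fin n → ℤ) ⥤ ModuleCat R) (Mbar : (Fin n → WithBot ℤ) ⥤ ModuleCat R)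
    (hext : IsExtension M Mbar)
    (hfp : ∀ c : Fin n → ℤ, Module.FinitePresentation R (M.obj c)) :
    (∃ a b : Fin n → ℤ, a ≤ b ∧ Nonempty ((proj_mono a b).functor ⋙ M ≅ M)) ↔
    ∃ S : Finset (Fin n → WithBot ℤ), SDet (↑S : Set (Fin n → WithBot ℤ)) Mbar := by
  obtain ⟨hM, hlim⟩ := hext
  subst hM
  constructor
  · rintro ⟨a, b, hab, ⟨η⟩⟩
    refine ⟨stS a b, ?_, ?_⟩
    · intro c _
      exact ⟨stTrunc a b c, Finset.mem_coe.mpr (stTrunc_mem hab c), stTrunc_le a b c⟩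
    · intro c d hcd hset
      have ht : stTrunc a b c = stTrunc a b d := stTrunc_eq hab hset
      have KL : ∀ (e e' : Fin n → ℤ) (hee : e ≤ e'), proj a b e' = proj a b e →
          Function.Bijective (Mbar.map (homOfLE (embZ_mono hee))) := by
        intro e e' hee hpp
        haveI hmid : IsIso (Mbar.map (homOfLE (embZ_mono (proj_mono a b hee)))) :=
          stMapIso Mbar _ (by rw [hpp])
        have heq : Mbar.map (homOfLE (embZ_mono hee)) =
            inv (η.hom.app e) ≫ Mbar.map (homOfLE (embZ_mono (proj_mono a b hee))) ≫
              η.hom.app e' := by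
          symm
          apply (IsIso.inv_comp_eq _).mpr
          exact η.hom.naturality (homOfLE hee)
        have : IsIso (Mbar.map (homOfLE (embZ_mono hee))) := by
          rw [heq]; exact IsIso.comp_isIso' (@IsIso.inv_isIso _ _ _ _ _ (Iso.isIso_hom (η.app e)))
            (IsIso.comp_isIso' hmid (Iso.isIso_hom (η.app e')))
        exact (ConcreteCategory.isIso_iff_bijective _).mp this
      set E : (Fin n → ℤ) → (Fin n → ℤ) := fun e i => max ((d i).unbotD (e i)) (e i) with hE
      have hde' : ∀ e, d ≤ embZ (E e) := by
        intro e i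
        show d i ≤ ((max ((d i).unbotD (e i)) (e i) : ℤ) : WithBot ℤ)
        induction d i using WithBot.recBotCoe with
        | bot => exact bot_le
        | coe m => rw [WithBot.unbotD_coe]; exact_mod_cast le_max_left _ _
      have hee' : ∀ e, e ≤ E e := fun e i => le_max_right _ _
      have hEmono : ∀ e g, e ≤ g → E e ≤ E g := by
        intro e g heg i
        show max ((d i).unbotD (e i)) (e i) ≤ max ((d i).unbotD (g i)) (g i)
        induction d i using WithBot.recBotCoe with
        | bot => simp only [WithBot.unbotD_bot, max_self]; exact heg i
        | coe m => rw [WithBot.unbotD_coe, WithBot.unbotD_coe]; exact max_le_max le_rfl (heg i)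
      have hproj : ∀ e, c ≤ embZ e → proj a b (E e) = proj a b e := by
        intro e he
        funext i
        exact stCoord (hab i) (congrFun ht i) (he i)
      have hinj : ∀ x y : Mbar.obj c,
          Mbar.map (homOfLE hcd) x = Mbar.map (homOfLE hcd) y → x = y := by
        intro x y hxy
        apply (hlim c).1 x y
        intro e he
        apply (KL e (E e) (hee' e) (hproj e he)).1
        show Mbar.map (homOfLE (embZ_mono (hee' e))) (Mbar.map (homOfLE he) x) = _
        have h2 : ∀ z : Mbar.obj c, Mbar.map (homOfLE (he.trans (embZ_mono (hee' e)))) z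
            = Mbar.map (homOfLE (hde' e)) (Mbar.map (homOfLE hcd) z) := fun z =>
          (stMapMap Mbar hcd (hde' e) z).symm
        rw [stMapMap Mbar he (embZ_mono (hee' e)) x, stMapMap Mbar he (embZ_mono (hee' e)) y,
          h2 x, h2 y, hxy]
      have hsurj : ∀ y : Mbar.obj d, ∃ x : Mbar.obj c, Mbar.map (homOfLE hcd) x = y := by
        intro y
        have hch : ∀ (e : Fin n → ℤ) (he : c ≤ embZ e),
            ∃ z : Mbar.obj (embZ e), Mbar.map (homOfLE (embZ_mono (hee' e))) z =
              Mbar.map (homOfLE (hde' e)) y :=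
          fun e he => (KL e (E e) (hee' e) (hproj e he)).2 _
        choose f hf using hch
        have hcompat : ∀ (e g : Fin n → ℤ) (hd1 : c ≤ embZ e) (hd2 : c ≤ embZ g) (heg : e ≤ g),
            Mbar.map (homOfLE (embZ_mono heg)) (f e hd1) = f g hd2 := by
          intro e g hd1 hd2 heg
          apply (KL g (E g) (hee' g) (hproj g hd2)).1
          rw [stMapMap Mbar (embZ_mono heg) (embZ_mono (hee' g)) (f e hd1)]
          have h3 : Mbar.map (homOfLE ((embZ_mono heg).trans (embZ_mono (hee' g)))) (f e hd1)
              = Mbar.map (homOfLE (embZ_mono (hEmono e g heg)))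
                  (Mbar.map (homOfLE (embZ_mono (hee' e))) (f e hd1)) :=
            (stMapMap Mbar (embZ_mono (hee' e)) (embZ_mono (hEmono e g heg)) (f e hd1)).symm
          rw [h3, hf e hd1, hf g hd2,
            stMapMap Mbar (hde' e) (embZ_mono (hEmono e g heg)) y]
        obtain ⟨x, hx⟩ := (hlim c).2 f hcompat
        refine ⟨x, ?_⟩
        apply (hlim d).1
        intro e he
        have hce : c ≤ embZ e := hcd.trans he
        rw [stMapMap Mbar hcd he x, hx e hce]
        apply (KL e (E e) (hee' e) (hproj e hce)).1
        rw [hf e hce, stMapMap Mbar he (embZ_mono (hee' e)) y]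
      exact (ConcreteCategory.isIso_iff_bijective _).mpr
        ⟨fun x y hxy => hinj x y hxy, fun y => hsurj y⟩
  · rintro ⟨S, hSsupp, hSiso⟩
    obtain ⟨K, hK1, hbound⟩ : ∃ K : ℤ, 1 ≤ K ∧ ∀ s ∈ S, ∀ i, ∀ m : ℤ,
        s i = (m : WithBot ℤ) → -K < m ∧ m ≤ K := by
      obtain ⟨N, hN⟩ : ∃ N : ℕ, N = S.sup (fun s => Finset.univ.sup fun i =>
          ((s i).unbotD 0).natAbs) := ⟨_, rfl⟩
      refine ⟨(N : ℤ) + 1, le_add_of_nonneg_left (Int.natCast_nonneg N), ?_⟩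
      intro s hs i m hm
      have h2 : ((s i).unbotD 0).natAbs ≤ N := by
        rw [hN]
        have h2a : ((s i).unbotD 0).natAbs ≤ Finset.univ.sup fun j => ((s j).unbotD 0).natAbs :=
          Finset.le_sup (f := fun j => ((s j).unbotD 0).natAbs) (Finset.mem_univ i)
        have h2b : (Finset.univ.sup fun j => ((s j).unbotD 0).natAbs) ≤
            S.sup (fun s => Finset.univ.sup fun i => ((s i).unbotD 0).natAbs) :=
          Finset.le_sup (f := fun s => Finset.univ.sup fun i => ((s i).unbotD 0).natAbs) hs
        exact le_trans h2a h2b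
      rw [hm, WithBot.unbotD_coe] at h2
      clear hN
      omega
    obtain ⟨a, ha⟩ : ∃ a : Fin n → ℤ, a = fun _ => -K := ⟨_, rfl⟩
    obtain ⟨b, hb⟩ : ∃ b : Fin n → ℤ, b = fun _ => K := ⟨_, rfl⟩
    have hab : a ≤ b := by
      intro i
      rw [ha, hb]
      show -K ≤ K
      omega
    obtain ⟨hat, hhat⟩ : ∃ hat : (Fin n → ℤ) → (Fin n → WithBot ℤ), hat =
      (fun c i => if c i < a i then ⊥ else ((min (c i) (b i) : ℤ) : WithBot ℤ)) := ⟨_, rfl⟩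
    have hR1 : ∀ c, hat c ≤ embZ c := by
      intro c i
      simp only [hhat]
      split_ifs with h
      · exact bot_le
      · show ((min (c i) (b i) : ℤ) : WithBot ℤ) ≤ ((c i : ℤ) : WithBot ℤ)
        exact_mod_cast min_le_left _ _
    have hR2 : ∀ c, hat c ≤ embZ (proj a b c) := by
      intro c i
      simp only [hhat]
      split_ifs with h
      · exact bot_le
      · show ((min (c i) (b i) : ℤ) : WithBot ℤ) ≤
          ((max (a i) (min (c i) (b i)) : ℤ) : WithBot ℤ)
        exact_mod_cast le_max_right _ _
    have hmono : Monotone hat := by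
      intro c e hce i
      simp only [hhat]
      split_ifs with h1 h2 h3
      · exact bot_le
      · exact bot_le
      · exact absurd (lt_of_le_of_lt (hce i) h3) h1
      · exact_mod_cast min_le_min (hce i) le_rfl
    have hdown1 : ∀ c, (↑S : Set (Fin n → WithBot ℤ)) ∩ {x | x ≤ hat c} =
        ↑S ∩ {x | x ≤ embZ c} := by
      intro c
      ext s
      simp only [Set.mem_inter_iff, Set.mem_setOf_eq]
      constructor
      · rintro ⟨hs, hle⟩
        exact ⟨hs, hle.trans (hR1 c)⟩
      · rintro ⟨hs, hle⟩
        refine ⟨hs, fun i => ?_⟩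
        have hgoal : s i ≤ hat c i := by
          by_cases hbb : s i = ⊥
          · rw [hbb]; exact bot_le
          · obtain ⟨m, hm⟩ := WithBot.ne_bot_iff_exists.mp hbb
            obtain ⟨h1, h2⟩ := hbound s (Finset.mem_coe.mp hs) i m hm.symm
            have hmc : m ≤ c i := by
              have h3 := hle i
              rw [← hm] at h3
              have h4 : (m : WithBot ℤ) ≤ ((c i : ℤ) : WithBot ℤ) := h3
              exact_mod_cast h4
            have hai : a i = -K := by simp [ha]
            have hbi : b i = K := by simp [hb]
            simp only [hhat]
            rw [← hm, if_neg (by omega)]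
            exact_mod_cast le_min hmc (by omega)
        exact hgoal
    have hdown2 : ∀ c, (↑S : Set (Fin n → WithBot ℤ)) ∩ {x | x ≤ hat c} =
        ↑S ∩ {x | x ≤ embZ (proj a b c)} := by
      intro c
      ext s
      simp only [Set.mem_inter_iff, Set.mem_setOf_eq]
      constructor
      · rintro ⟨hs, hle⟩
        exact ⟨hs, hle.trans (hR2 c)⟩
      · rintro ⟨hs, hle⟩
        refine ⟨hs, fun i => ?_⟩
        have hgoal : s i ≤ hat c i := by
          by_cases hbb : s i = ⊥
          · rw [hbb]; exact bot_le
          · obtain ⟨m, hm⟩ := WithBot.ne_bot_iff_exists.mp hbb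
            obtain ⟨h1, h2⟩ := hbound s (Finset.mem_coe.mp hs) i m hm.symm
            have hmc : m ≤ max (a i) (min (c i) (b i)) := by
              have h3 := hle i
              rw [← hm] at h3
              have h4 : (m : WithBot ℤ) ≤ ((max (a i) (min (c i) (b i)) : ℤ) : WithBot ℤ) := h3
              exact_mod_cast h4
            have hai : a i = -K := by simp [ha]
            have hbi : b i = K := by simp [hb]
            simp only [hhat]
            rw [← hm, if_neg (by omega)]
            exact_mod_cast (by omega : m ≤ min (c i) (b i))
        exact hgoal
    haveI hα : ∀ c, IsIso (Mbar.map (homOfLE (hR2 c))) := fun c => hSiso _ _ (hR2 c) (hdown2 c)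
    haveI hβ : ∀ c, IsIso (Mbar.map (homOfLE (hR1 c))) := fun c => hSiso _ _ (hR1 c) (hdown1 c)
    refine ⟨a, b, hab, ⟨?_⟩⟩
    let θ1 : hmono.functor ⋙ Mbar ⟶ (proj_mono a b).functor ⋙ embZ_mono.functor ⋙ Mbar :=
      { app := fun c => Mbar.map (homOfLE (hR2 c))
        naturality := fun c e f => stMapComp Mbar _ _ _ _ }
    let θ2 : hmono.functor ⋙ Mbar ⟶ embZ_mono.functor ⋙ Mbar :=
      { app := fun c => Mbar.map (homOfLE (hR1 c))
        naturality := fun c e f => stMapComp Mbar _ _ _ _ }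
    haveI h1 : ∀ X, IsIso (θ1.app X) := hα
    haveI h2 : ∀ X, IsIso (θ2.app X) := hβ
    haveI : IsIso θ1 := NatIso.isIso_of_isIso_app θ1
    haveI : IsIso θ2 := NatIso.isIso_of_isIso_app θ2
    exact (asIso θ1).symm ≪≫ asIso θ2
end
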